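/- arXiv:2108.13564 — 9 statements merged into one kernel-verified Lean document; each statement's English description precedes it below -/
import Mathlib

section
/- The maximum number of inversions of a meet-irreducible (bigrassmannian) permutation in S_n is ⌊n²/4⌋. -/
/-- A permutation of ℕ supported on {1,…,n}, representing an element of Sₙ. -/
def Supported (n : ℕ) (w : Equiv.Perm ℕ) : Prop :=
  ∀ i, w i ≠ i → i ∈ Finset.Icc 1 n

/-- Right descent set: i ∈ [n-1] with w(i) > w(i+1). -/
def rightDescents (n : ℕ) (w : Equiv.Perm ℕ) : Finset ℕ :=
  (Finset.Icc 1 (n - 1)).filter (fun i => w (i + 1) < w i)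

/-- Left descent set: right descents of w⁻¹. -/
def leftDescents (n : ℕ) (w : Equiv.Perm ℕ) : Finset ℕ :=
  rightDescents n w⁻¹

/-- Inversions: pairs (i,j), 1 ≤ i < j ≤ n, with w(i) > w(j). -/
def inversions (n : ℕ) (w : Equiv.Perm ℕ) : Finset (ℕ × ℕ) :=
  ((Finset.Icc 1 n) ×ˢ (Finset.Icc 1 n)).filter (fun p => p.1 < p.2 ∧ w p.2 < w p.1)

/-- Number of inversions. -/
def ell (n : ℕ) (w : Equiv.Perm ℕ) : ℕ := (inversions n w).card

/-- Meet-irreducible (bigrassmannian): exactly one left and one right descent. -/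
def Bigrassmannian (n : ℕ) (w : Equiv.Perm ℕ) : Prop :=
  (leftDescents n w).card = 1 ∧ (rightDescents n w).card = 1

def rotFun (n q i : ℕ) : ℕ :=
  if 1 ≤ i ∧ i ≤ n then (if i + q ≤ n then i + q else i + q - n) else i

def rot (n q : ℕ) (hq : q ≤ n) : Equiv.Perm ℕ where
  toFun := rotFun n q
  invFun := rotFun n (n - q)
  left_inv i := by unfold rotFun; split_ifs <;> omega
  right_inv i := by unfold rotFun; split_ifs <;> omega

lemma rot_apply (n q : ℕ) (hq : q ≤ n) (i : ℕ) : (rot n q hq) i = rotFun n q i := rfl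

lemma rot_inv_apply (n q : ℕ) (hq : q ≤ n) (i : ℕ) :
    (rot n q hq)⁻¹ i = rotFun n (n - q) i := rfl

lemma chain_mono (w : Equiv.Perm ℕ) (a : ℕ) :
    ∀ b, a ≤ b → (∀ i, a ≤ i → i < b → w i < w (i + 1)) → w a ≤ w b := by
  intro b
  induction b with
  | zero => intro h _; obtain rfl : a = 0 := Nat.le_zero.mp h; exact le_rfl
  | succ b ih =>
    intro hab h
    rcases Nat.lt_or_ge a (b + 1) with h1 | h1
    · have hab' : a ≤ b := by omega
      exact (ih hab' fun i hi hib => h i hi (by omega)).trans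
        (h b hab' (by omega)).le
    · obtain rfl : a = b + 1 := by omega
      exact le_rfl

/-- The maximum number of inversions of a meet-irreducible (bigrassmannian)
permutation in Sₙ is ⌊n²/4⌋. -/
theorem max_inversions_bigrassmannian (n : ℕ) (hn : 2 ≤ n) :
    (∀ w : Equiv.Perm ℕ, Supported n w → Bigrassmannian n w → ell n w ≤ n ^ 2 / 4) ∧
    (∃ w : Equiv.Perm ℕ, Supported n w ∧ Bigrassmannian n w ∧ ell n w = n ^ 2 / 4) := by
  constructor
  · -- Upper bound
    rintro w _ ⟨_, hr⟩
    obtain ⟨r, hr1⟩ := Finset.card_eq_one.mp hr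
    have hrmem : r ∈ rightDescents n w := hr1 ▸ Finset.mem_singleton_self r
    have hrr : (1 ≤ r ∧ r ≤ n - 1) ∧ w (r + 1) < w r := by
      simpa [rightDescents, Finset.mem_Icc] using hrmem
    have hno : ∀ i, 1 ≤ i → i ≤ n - 1 → i ≠ r → w i < w (i + 1) := by
      intro i h1 h2 hne
      have hnot : i ∉ rightDescents n w := by rw [hr1]; simpa using hne
      simp only [rightDescents, Finset.mem_filter, Finset.mem_Icc, not_and, not_lt] at hnot
      have hle := hnot ⟨h1, h2⟩
      have hne2 : w i ≠ w (i + 1) := fun h => by have := w.injective h; omega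
      omega
    have hsub : inversions n w ⊆ Finset.Icc 1 r ×ˢ Finset.Icc (r + 1) n := by
      intro p hp
      simp only [inversions, Finset.mem_filter, Finset.mem_product, Finset.mem_Icc] at hp ⊢
      obtain ⟨⟨⟨hi1, hin⟩, hj1, hjn⟩, hij, hw⟩ := hp
      constructor
      · refine ⟨hi1, ?_⟩
        by_contra hcon
        have := chain_mono w p.1 p.2 hij.le fun k hk1 hk2 =>
          hno k (by omega) (by omega) (by omega)
        omega
      · refine ⟨?_, hjn⟩
        by_contra hcon
        have := chain_mono w p.1 p.2 hij.le fun k hk1 hk2 =>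
          hno k (by omega) (by omega) (by omega)
        omega
    have hcard : ell n w ≤ r * (n - r) := by
      calc ell n w ≤ (Finset.Icc 1 r ×ˢ Finset.Icc (r + 1) n).card :=
            Finset.card_le_card hsub
        _ = r * (n - r) := by
            rw [Finset.card_product, Nat.card_Icc, Nat.card_Icc]
            congr 1; omega
    refine hcard.trans ?_
    rw [Nat.le_div_iff_mul_le (by norm_num)]
    have hs : r + (n - r) = n := by omega
    nlinarith [two_mul_le_add_sq r (n - r), sq_nonneg (r + (n - r))]
  · -- Existence
    have hq : n - n / 2 ≤ n := Nat.sub_le _ _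
    refine ⟨rot n (n - n / 2) hq, ?_, ⟨?_, ?_⟩, ?_⟩
    · intro i hi
      simp only [Finset.mem_Icc]
      by_contra hcon
      refine hi ?_
      show rotFun n (n - n / 2) i = i
      unfold rotFun
      split_ifs <;> omega
    · -- left descents: {n - n/2}
      have h : leftDescents n (rot n (n - n / 2) hq) = {n - n / 2} := by
        ext i
        simp only [leftDescents, rightDescents, Finset.mem_filter]
        simp only [leftDescents, rightDescents, Finset.mem_filter, Finset.mem_Icc,
          Finset.mem_singleton, rot_inv_apply]
        unfold rotFun
        split_ifs <;> omega
      rw [h, Finset.card_singleton]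
    · -- right descents: {n/2}
      have h : rightDescents n (rot n (n - n / 2) hq) = {n / 2} := by
        ext i
        simp only [rightDescents, Finset.mem_filter]
        simp only [rightDescents, Finset.mem_filter, Finset.mem_Icc,
          Finset.mem_singleton, rot_apply]
        unfold rotFun
        split_ifs <;> omega
      rw [h, Finset.card_singleton]
    · have hinv : inversions n (rot n (n - n / 2) hq) =
          Finset.Icc 1 (n / 2) ×ˢ Finset.Icc (n / 2 + 1) n := by
        ext ⟨i, j⟩
        simp only [inversions, Finset.mem_filter]
        simp only [inversions, Finset.mem_filter, Finset.mem_product, Finset.mem_Icc,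
          rot_apply]
        unfold rotFun
        split_ifs <;> omega
      rw [ell, hinv, Finset.card_product, Nat.card_Icc, Nat.card_Icc]
      obtain ⟨m, hm | hm⟩ : ∃ m, n = 2 * m ∨ n = 2 * m + 1 := ⟨n / 2, by omega⟩
      · have e : n ^ 2 = m * m * 4 := by subst hm; ring
        have e2 : n ^ 2 / 4 = m * m := by omega
        have a1 : n / 2 + 1 - 1 = m := by omega
        have a2 : n + 1 - (n / 2 + 1) = m := by omega
        rw [a1, a2, e2]
      · have e : n ^ 2 = (m * m + m) * 4 + 1 := by subst hm; ring
        have e2 : n ^ 2 / 4 = m * m + m := by omega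
        have a1 : n / 2 + 1 - 1 = m := by omega
        have a2 : n + 1 - (n / 2 + 1) = m + 1 := by omega
        rw [a1, a2, e2]; ring
end

section
/- A permutation w ∈ S_n has exactly one left descent and exactly one right descent if and only if there exist nonnegative integers i₁, i₂, i₃, i₄ with i₂ ≥ 1, i₃ ≥ 1, i₁ + i₂ + i₃ + i₄ = n, such that w(i) = i for 1 ≤ i ≤ i₁, w(i) = i + i₃ for i₁+1 ≤ i ≤ i₁+i₂, w(i) = i − i₂ for i₁+i₂+1 ≤ i ≤ i₁+i₂+i₃, and w(i) = i for i₁+i₂+i₃+1 ≤ i ≤ n. -/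
private lemma bg_inv_apply_self (w : Equiv.Perm ℕ) (i : ℕ) : w⁻¹ (w i) = i :=
  Equiv.symm_apply_apply w i

private lemma bg_apply_inv_self (w : Equiv.Perm ℕ) (i : ℕ) : w (w⁻¹ i) = i :=
  Equiv.apply_symm_apply w i

private lemma bg_mono_of_adj (f : ℕ → ℕ) (lo hi : ℕ)
    (h : ∀ k, lo ≤ k → k + 1 ≤ hi → f k < f (k + 1)) :
    ∀ i j, lo ≤ i → i < j → j ≤ hi → f i < f j := by
  intro i j hli
  induction j with
  | zero => intro h1 h2; omega
  | succ m ih =>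
    intro hij hjb
    rcases Nat.lt_or_ge i m with h' | h'
    · exact (ih h' (by omega)).trans (h m (by omega) hjb)
    · have him : i = m := by omega
      subst him
      exact h i hli hjb

private lemma bg_grow_of_mono (f : ℕ → ℕ) (lo hi : ℕ)
    (h : ∀ i j, lo ≤ i → i < j → j ≤ hi → f i < f j) :
    ∀ i j, lo ≤ i → i ≤ j → j ≤ hi → f i + (j - i) ≤ f j := by
  intro i j hli
  induction j with
  | zero =>
    intro h1 h2
    have : i = 0 := by omega
    subst this; simp
  | succ m ih =>
    intro hij hjb
    rcases Nat.lt_or_ge i (m + 1) with h' | h'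
    · have h2 := ih (by omega) (by omega)
      have h3 := h m (m + 1) (by omega) (by omega) hjb
      omega
    · have hi2 : i = m + 1 := by omega
      subst hi2; simp

private lemma bg_supp_inv (n : ℕ) (w : Equiv.Perm ℕ) (hw : Supported n w) :
    Supported n w⁻¹ := by
  intro i hi
  by_contra hmem
  have h1 : w i = i := by
    by_contra h2
    exact hmem (hw i h2)
  apply hi
  nth_rewrite 1 [← h1]
  exact bg_inv_apply_self w i

private lemma bg_toolkit (n : ℕ) (u : Equiv.Perm ℕ) (hu : Supported n u) (a : ℕ)
    (hset : rightDescents n u = {a}) :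
    (1 ≤ a ∧ a + 1 ≤ n) ∧
    (∀ i, 1 ≤ i → i ≤ n → 1 ≤ u i ∧ u i ≤ n) ∧
    (∀ i j, 1 ≤ i → i < j → j ≤ a → u i < u j) ∧
    (∀ i j, a < i → i < j → j ≤ n → u i < u j) ∧
    (∀ i, 1 ≤ i → i ≤ a → i ≤ u i) ∧
    (∀ i, a < i → i ≤ n → u i ≤ i) ∧
    u a ≠ a := by
  have hmem : a ∈ rightDescents n u := by rw [hset]; exact Finset.mem_singleton_self a
  simp only [rightDescents, Finset.mem_filter, Finset.mem_Icc] at hmem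
  obtain ⟨⟨ha1, ha2⟩, hdesc⟩ := hmem
  have han : a + 1 ≤ n := by omega
  have smap : ∀ i, 1 ≤ i → i ≤ n → 1 ≤ u i ∧ u i ≤ n := by
    intro i h1 h2
    by_contra hc
    have h3 : u (u i) = u i := by
      by_contra h4
      have h5 := hu _ h4
      simp only [Finset.mem_Icc] at h5
      omega
    have h6 := u.injective h3
    omega
  have hadj : ∀ k, 1 ≤ k → k + 1 ≤ n → k ≠ a → u k < u (k + 1) := by
    intro k h1 h2 h3
    have h4 : k ∉ rightDescents n u := by rw [hset]; simp [h3]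
    simp only [rightDescents, Finset.mem_filter, Finset.mem_Icc] at h4
    have h5 : ¬ u (k + 1) < u k := by
      intro h6; exact h4 ⟨⟨h1, by omega⟩, h6⟩
    have h7 : u k ≠ u (k + 1) := u.injective.ne (by omega)
    omega
  have mono1 := bg_mono_of_adj u 1 a (fun k hk1 hk2 => hadj k hk1 (by omega) (by omega))
  have mono2 := bg_mono_of_adj u (a + 1) n (fun k hk1 hk2 => hadj k (by omega) hk2 (by omega))
  have mono2' : ∀ i j, a < i → i < j → j ≤ n → u i < u j :=
    fun i j h1 h2 h3 => mono2 i j (by omega) h2 h3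
  have grow1 := bg_grow_of_mono u 1 a mono1
  have grow2 := bg_grow_of_mono u (a + 1) n mono2
  have lb : ∀ i, 1 ≤ i → i ≤ a → i ≤ u i := by
    intro i h1 h2
    have h3 := grow1 1 i le_rfl h1 h2
    have h4 := (smap 1 le_rfl (by omega)).1
    omega
  have ub : ∀ i, a < i → i ≤ n → u i ≤ i := by
    intro i h1 h2
    have h3 := grow2 i n (by omega) h2 le_rfl
    have h4 := (smap n (by omega) le_rfl).2
    omega
  refine ⟨⟨ha1, han⟩, smap, mono1, mono2', lb, ub, ?_⟩
  intro hfix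
  have hfixall : ∀ i, 1 ≤ i → i ≤ a → u i = i := by
    intro i h1 h2
    have h3 := grow1 i a h1 h2 le_rfl
    have h4 := lb i h1 h2
    omega
  have h5 := smap (a + 1) (by omega) han
  have h7 := hfixall (u (a + 1)) h5.1 (by omega)
  have h8 := u.injective h7
  omega

private lemma bg_key (n : ℕ) (u : Equiv.Perm ℕ) (a b i1 : ℕ)
    (hsm : ∀ i, 1 ≤ i → i ≤ n → 1 ≤ u i ∧ u i ≤ n)
    (hsminv : ∀ i, 1 ≤ i → i ≤ n → u⁻¹ i ≤ n)
    (hb : b ≤ n) (hi1a : i1 < a)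
    (hfix1 : ∀ j, 1 ≤ j → j ≤ i1 → u j = j)
    (hmono2 : ∀ i j, a < i → i < j → j ≤ n → u i < u j)
    (hmonoinv : ∀ i j, 1 ≤ i → i < j → j ≤ b → u⁻¹ i < u⁻¹ j)
    (hK3 : ∀ k, i1 < k → k ≤ b → a < u⁻¹ k)
    (hfixB : ∀ j, a < j → j ≤ n → b < u j → u j = j)
    (hnofix : ∀ f, a < f → f ≤ b → u f ≠ f) :
    ∀ t, 1 ≤ t → i1 + t ≤ b → u⁻¹ (i1 + t) = a + t := by
  have hmoved : ∀ k, i1 < k → k ≤ b → u⁻¹ k ≠ k := by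
    intro k hk1 hk2 hc
    have h1 := hK3 k hk1 hk2
    have h2 : u k = k := by
      have h3 := congrArg u hc
      rw [bg_apply_inv_self] at h3
      exact h3.symm
    exact hnofix k (by omega) hk2 h2
  have hgrow := bg_grow_of_mono (⇑u⁻¹) 1 b hmonoinv
  have lemma3 : ∀ j, a < j → j ≤ n → u j ≠ j → i1 < u j ∧ u j ≤ b := by
    intro j h1 h2 h3
    have h4 : u j ≤ b := by
      by_contra h5
      exact h3 (hfixB j h1 h2 (by omega))
    have h6 : 1 ≤ u j := (hsm j (by omega) h2).1
    refine ⟨?_, h4⟩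
    by_contra h7
    have h8 : u (u j) = u j := hfix1 (u j) h6 (by omega)
    have h9 := u.injective h8
    exact h3 h9
  have lemma5 : ∀ f s, a < f → f ≤ n → u f = f → a < s → s ≤ n → u s ≠ s → s < f := by
    intro f s hf1 hf2 hff hs1 hs2 hss
    rcases lt_trichotomy f s with h | h | h
    · have h2 := hmono2 f s hf1 h hs2
      have h4 := (lemma3 s hs1 hs2 hss).2
      exact absurd hff (hnofix f hf1 (by omega))
    · exact absurd hff (h ▸ hss)
    · exact h
  intro t
  induction t using Nat.strong_induction_on with
  | _ t ih =>
    intro ht1 ht2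
    have hK31 := hK3 (i1 + 1) (by omega) (by omega)
    have hlow : a + t ≤ u⁻¹ (i1 + t) := by
      have g := hgrow (i1 + 1) (i1 + t) (by omega) (by omega) (by omega)
      omega
    rcases eq_or_lt_of_le hlow with heq | hlt
    · exact heq.symm
    · exfalso
      have hxn : a + t ≤ n := by
        have := hsminv (i1 + t) (by omega) (by omega)
        omega
      by_cases hx : u (a + t) = a + t
      · have hs1 : a < u⁻¹ (i1 + t) := hK3 _ (by omega) ht2
        have hs2 : u⁻¹ (i1 + t) ≤ n := hsminv _ (by omega) (by omega)
        have hsm' : u (u⁻¹ (i1 + t)) ≠ u⁻¹ (i1 + t) := by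
          rw [bg_apply_inv_self]
          exact Ne.symm (hmoved (i1 + t) (by omega) ht2)
        have := lemma5 (a + t) (u⁻¹ (i1 + t)) (by omega) hxn hx hs1 hs2 hsm'
        omega
      · set k := u (a + t) with hk
        have h3 := lemma3 (a + t) (by omega) hxn hx
        have hik : u⁻¹ k = a + t := by
          rw [hk]; exact bg_inv_apply_self u (a + t)
        rcases lt_trichotomy k (i1 + t) with hc | hc | hc
        · have h5 := ih (k - i1) (by omega) (by omega) (by omega)
          rw [show i1 + (k - i1) = k by omega] at h5
          omega
        · rw [hc] at hik; omega
        · have := hmonoinv (i1 + t) k (by omega) hc h3.2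
          omega

private def BB (n i1 i2 i3 : ℕ) (w : Equiv.Perm ℕ) : Prop :=
  (∀ i, 1 ≤ i → i ≤ i1 → w i = i) ∧
  (∀ i, i1 + 1 ≤ i → i ≤ i1 + i2 → w i = i + i3) ∧
  (∀ i, i1 + i2 + 1 ≤ i → i ≤ i1 + i2 + i3 → w i = i - i2) ∧
  (∀ i, i1 + i2 + i3 + 1 ≤ i → i ≤ n → w i = i)

private lemma bg_bb_symm (n i1 i2 i3 : ℕ) (w : Equiv.Perm ℕ) (hb : BB n i1 i2 i3 w) :
    BB n i1 i3 i2 w⁻¹ := by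
  obtain ⟨b1, b2, b3, b4⟩ := hb
  refine ⟨?_, ?_, ?_, ?_⟩
  · intro j hj1 hj2
    rw [Equiv.Perm.inv_eq_iff_eq]
    exact (b1 j hj1 hj2).symm
  · intro j hj1 hj2
    rw [Equiv.Perm.inv_eq_iff_eq]
    rw [b3 (j + i2) (by omega) (by omega)]
    omega
  · intro j hj1 hj2
    rw [Equiv.Perm.inv_eq_iff_eq]
    rw [b2 (j - i3) (by omega) (by omega)]
    omega
  · intro j hj1 hj2
    rw [Equiv.Perm.inv_eq_iff_eq]
    exact (b4 j (by omega) hj2).symm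

private lemma bg_bb_rdesc (n i1 i2 i3 : ℕ) (w : Equiv.Perm ℕ) (h2 : 1 ≤ i2) (h3 : 1 ≤ i3)
    (hn : i1 + i2 + i3 ≤ n) (hb : BB n i1 i2 i3 w) :
    rightDescents n w = {i1 + i2} := by
  obtain ⟨b1, b2, b3, b4⟩ := hb
  ext i
  simp only [rightDescents, Finset.mem_filter, Finset.mem_Icc, Finset.mem_singleton]
  constructor
  · rintro ⟨⟨hi1, hi2'⟩, hdesc⟩
    by_contra hne
    have hlt : w i < w (i + 1) := by
      rcases Nat.lt_or_ge i i1 with c1 | c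
      · rw [b1 i hi1 (by omega), b1 (i + 1) (by omega) (by omega)]; omega
      rcases Nat.eq_or_lt_of_le c with c2 | c
      · rw [b1 i hi1 (by omega), b2 (i + 1) (by omega) (by omega)]; omega
      rcases Nat.lt_or_ge i (i1 + i2) with c3 | c
      · rw [b2 i (by omega) (by omega), b2 (i + 1) (by omega) (by omega)]; omega
      rcases Nat.eq_or_lt_of_le c with c4 | c
      · exact absurd c4.symm hne
      rcases Nat.lt_or_ge i (i1 + i2 + i3) with c5 | c
      · rw [b3 i (by omega) (by omega), b3 (i + 1) (by omega) (by omega)]; omega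
      rcases Nat.eq_or_lt_of_le c with c6 | c
      · rw [b3 i (by omega) (by omega), b4 (i + 1) (by omega) (by omega)]; omega
      · rw [b4 i (by omega) (by omega), b4 (i + 1) (by omega) (by omega)]; omega
    omega
  · intro hi
    subst hi
    refine ⟨⟨by omega, by omega⟩, ?_⟩
    rw [b2 (i1 + i2) (by omega) (by omega), b3 (i1 + i2 + 1) (by omega) (by omega)]
    omega

private lemma bg_forward (n : ℕ) (w : Equiv.Perm ℕ) (hw : Supported n w)
    (d e : ℕ) (hd : rightDescents n w = {d}) (he : rightDescents n w⁻¹ = {e})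
    (hde : d ≤ e) :
    ∃ i1 i2 i3, 1 ≤ i2 ∧ 1 ≤ i3 ∧ i1 + i2 + i3 ≤ n ∧ BB n i1 i2 i3 w := by
  classical
  obtain ⟨⟨hd1, hdn⟩, smap, mono1, mono2, lb1, ub1, wdne⟩ := bg_toolkit n w hw d hd
  obtain ⟨⟨he1, hen⟩, smap', mono1', mono2', lb1', ub1', wene⟩ :=
    bg_toolkit n w⁻¹ (bg_supp_inv n w hw) e he
  have fixA : ∀ j, 1 ≤ j → j ≤ d → w j ≤ e → w j = j := by
    intro j h1 h2 h3
    have h4 := lb1 j h1 h2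
    have h5 := lb1' (w j) (smap j h1 (by omega)).1 h3
    rw [bg_inv_apply_self] at h5
    omega
  have fixB : ∀ j, d < j → j ≤ n → e < w j → w j = j := by
    intro j h1 h2 h3
    have h4 := ub1 j h1 h2
    have h5 := ub1' (w j) h3 (smap j (by omega) h2).2
    rw [bg_inv_apply_self] at h5
    omega
  have fixA' : ∀ k, 1 ≤ k → k ≤ e → w⁻¹ k ≤ d → w⁻¹ k = k := by
    intro k h1 h2 h3
    have h4 := lb1' k h1 h2
    have h5 := lb1 (w⁻¹ k) (smap' k h1 (by omega)).1 h3
    rw [bg_apply_inv_self] at h5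
    omega
  have fixB' : ∀ k, e < k → k ≤ n → d < w⁻¹ k → w⁻¹ k = k := by
    intro k h1 h2 h3
    have h4 := ub1' k h1 h2
    have h5 := ub1 (w⁻¹ k) h3 (smap' k (by omega) h2).2
    rw [bg_apply_inv_self] at h5
    omega
  let Q : ℕ → Prop := fun m => ∀ j, 1 ≤ j → j ≤ m → w j = j
  have hdec : DecidablePred Q := fun _ => Classical.propDecidable _
  set i1 := Nat.findGreatest Q d with hi1def
  have hQ0 : Q 0 := by intro j hj1 hj2; omega
  have hPi1 : ∀ j, 1 ≤ j → j ≤ i1 → w j = j :=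
    Nat.findGreatest_spec (Nat.zero_le d) hQ0
  have hi1d : i1 ≤ d := Nat.findGreatest_le d
  have hi1lt : i1 < d := by
    rcases Nat.eq_or_lt_of_le hi1d with h | h
    · exact absurd (hPi1 d (by omega) (by omega)) wdne
    · exact h
  have hmoved : w (i1 + 1) ≠ i1 + 1 := by
    have h1 : ¬ Q (i1 + 1) := Nat.findGreatest_is_greatest (n := d) (by omega) (by omega)
    intro h2
    apply h1
    intro j hj1 hj2
    rcases Nat.eq_or_lt_of_le hj2 with h3 | h3
    · rw [h3]; exact h2
    · exact hPi1 j hj1 (by omega)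
  have hgt : ∀ j, i1 < j → j ≤ d → e < w j := by
    intro j h1 h2
    have h3 : e < w (i1 + 1) := by
      by_contra h4
      exact hmoved (fixA (i1 + 1) (by omega) (by omega) (by omega))
    rcases Nat.eq_or_lt_of_le (show i1 + 1 ≤ j by omega) with h5 | h5
    · rw [← h5]; exact h3
    · exact h3.trans (mono1 (i1 + 1) j (by omega) h5 h2)
  have hgt' : ∀ k, i1 < k → k ≤ e → d < w⁻¹ k := by
    intro k h1 h2
    have h3 : d < w⁻¹ (i1 + 1) := by
      by_contra h4
      have h5 := fixA' (i1 + 1) (by omega) (by omega) (by omega)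
      have h6 := congrArg w h5
      rw [bg_apply_inv_self] at h6
      exact hmoved h6.symm
    rcases Nat.eq_or_lt_of_le (show i1 + 1 ≤ k by omega) with h5 | h5
    · rw [← h5]; exact h3
    · exact h3.trans (mono1' (i1 + 1) k (by omega) h5 h2)
  have growinv := bg_grow_of_mono (⇑w⁻¹) 1 e mono1'
  have hnofix : ∀ f, d < f → f ≤ e → w f ≠ f := by
    intro f h1 h2 h3
    have h4 : w⁻¹ f = f := by
      have h5 := congrArg (⇑w⁻¹) h3
      rw [bg_inv_apply_self] at h5
      exact h5.symm
    have h5 := growinv (i1 + 1) (f - 1) (by omega) (by omega) (by omega)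
    have h6 := hgt' (i1 + 1) (by omega) (by omega)
    have h7 := mono1' (f - 1) f (by omega) (by omega) h2
    omega
  have smapinv : ∀ i, 1 ≤ i → i ≤ n → w⁻¹ i ≤ n := fun i h1 h2 => (smap' i h1 h2).2
  have key1 := bg_key n w d e i1 smap smapinv (by omega) hi1lt hPi1
    mono2 mono1' hgt' fixB hnofix
  have key2 : ∀ t, 1 ≤ t → i1 + t ≤ d → w (i1 + t) = e + t := by
    have h := bg_key n w⁻¹ e d i1 smap'
      (fun i h1 h2 => by rw [inv_inv]; exact (smap i h1 h2).2)
      (by omega) (by omega)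
      (fun j h1 h2 => by
        have h3 := congrArg (⇑w⁻¹) (hPi1 j h1 h2)
        rw [bg_inv_apply_self] at h3
        exact h3.symm)
      mono2'
      (fun i j h1 h2 h3 => by simp only [inv_inv]; exact mono1 i j h1 h2 h3)
      (fun k h1 h2 => by simp only [inv_inv]; exact hgt k h1 h2)
      fixB'
      (fun f hf1 hf2 => by omega)
    intro t h1 h2
    have h3 := h t h1 h2
    rwa [inv_inv] at h3
  refine ⟨i1, d - i1, e - i1, by omega, by omega, ?_, hPi1, ?_, ?_, ?_⟩
  · have h := key1 (e - i1) (by omega) (by omega)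
    rw [show i1 + (e - i1) = e by omega] at h
    have h2 := smapinv e (by omega) (by omega)
    omega
  · intro i h1 h2
    have h := key2 (i - i1) (by omega) (by omega)
    rw [show i1 + (i - i1) = i by omega] at h
    omega
  · intro i h1 h2
    have h := key1 (i - d) (by omega) (by omega)
    have h3 := congrArg (⇑w) h
    rw [bg_apply_inv_self] at h3
    rw [show d + (i - d) = i by omega] at h3
    omega
  · intro i h1 h2
    by_contra hmovedi
    have hwle : w i ≤ e := by
      by_contra h3
      exact hmovedi (fixB i (by omega) h2 (by omega))
    have hw1 : 1 ≤ w i := (smap i (by omega) h2).1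
    have hwgt : i1 < w i := by
      by_contra h3
      have h4 := hPi1 (w i) hw1 (by omega)
      have h5 := w.injective h4
      exact hmovedi h5
    have h := key1 (w i - i1) (by omega) (by omega)
    rw [show i1 + (w i - i1) = w i by omega] at h
    rw [bg_inv_apply_self] at h
    omega

/-- A permutation w ∈ Sₙ has exactly one left descent and exactly one right
descent iff it is a "block interchange" permutation w(i₁,i₂,i₃,i₄). -/
theorem bigrassmannian_iff_block (n : ℕ) (w : Equiv.Perm ℕ) (hw : Supported n w) :
    ((leftDescents n w).card = 1 ∧ (rightDescents n w).card = 1) ↔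
    ∃ i1 i2 i3 i4 : ℕ, 1 ≤ i2 ∧ 1 ≤ i3 ∧ i1 + i2 + i3 + i4 = n ∧
      (∀ i, 1 ≤ i → i ≤ i1 → w i = i) ∧
      (∀ i, i1 + 1 ≤ i → i ≤ i1 + i2 → w i = i + i3) ∧
      (∀ i, i1 + i2 + 1 ≤ i → i ≤ i1 + i2 + i3 → w i = i - i2) ∧
      (∀ i, i1 + i2 + i3 + 1 ≤ i → i ≤ n → w i = i) := by
  constructor
  · rintro ⟨hL, hR⟩
    simp only [leftDescents] at hL
    obtain ⟨e, he⟩ := Finset.card_eq_one.mp hL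
    obtain ⟨d, hd⟩ := Finset.card_eq_one.mp hR
    rcases le_total d e with h | h
    · obtain ⟨i1, i2, i3, h2, h3, h4, b1, b2, b3, b4⟩ := bg_forward n w hw d e hd he h
      exact ⟨i1, i2, i3, n - (i1 + i2 + i3), h2, h3, by omega, b1, b2, b3, b4⟩
    · have hw' : Supported n w⁻¹ := bg_supp_inv n w hw
      have hd' : rightDescents n (w⁻¹)⁻¹ = {d} := by rw [inv_inv]; exact hd
      obtain ⟨i1, i2, i3, h2, h3, h4, hbb⟩ := bg_forward n w⁻¹ hw' e d he hd' h
      have hbb' := bg_bb_symm n i1 i2 i3 w⁻¹ hbb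
      rw [inv_inv] at hbb'
      obtain ⟨b1, b2, b3, b4⟩ := hbb'
      exact ⟨i1, i3, i2, n - (i1 + i3 + i2), h3, h2, by omega, b1, b2, b3, b4⟩
  · rintro ⟨i1, i2, i3, i4, h2, h3, hsum, b1, b2, b3, b4⟩
    have hbb : BB n i1 i2 i3 w := ⟨b1, b2, b3, b4⟩
    have hR := bg_bb_rdesc n i1 i2 i3 w h2 h3 (by omega) hbb
    have hbb' := bg_bb_symm n i1 i2 i3 w hbb
    have hL := bg_bb_rdesc n i1 i3 i2 w⁻¹ h3 h2 (by omega) hbb'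
    constructor
    · simp only [leftDescents]
      rw [hL]
      simp
    · rw [hR]
      simp
end

section
/- If Q is a meet-irreducible irreducible discrete quasi-copula on L_n (n ≥ 2), then its Kendall's τ satisfies −1/(n−1) ≤ τ(Q) ≤ 1. -/
/-- Kendall's τ of the discrete copula Q(w). -/
noncomputable def tau (n : ℕ) (w : Equiv.Perm ℕ) : ℝ :=
  1 - 2 * (ell n w : ℝ) / ((n : ℝ) * ((n : ℝ) - 1) / 2)

/-- Monotone along descent-free stretches. -/
lemma chain_mono_s3 (n : ℕ) (w : Equiv.Perm ℕ) (b : ℕ)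
    (hd : ∀ i ∈ Finset.Icc 1 (n - 1), w (i + 1) < w i → i = b) :
    ∀ i j, 1 ≤ i → j ≤ n → i ≤ j → (∀ k, i ≤ k → k < j → k ≠ b) → w i ≤ w j := by
  intro i j hi
  induction j with
  | zero => intro _ hij _; omega
  | succ m ih =>
    intro hjn hij hk
    rcases Nat.lt_or_ge i (m + 1) with h | h
    · have him : i ≤ m := by omega
      have h1 : w i ≤ w m := ih (by omega) him (fun k hk1 hk2 => hk k hk1 (by omega))
      have hm1 : m ∈ Finset.Icc 1 (n - 1) := by
        simp only [Finset.mem_Icc]; omega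
      have hmb : m ≠ b := hk m him (by omega)
      have hnd : ¬ w (m + 1) < w m := fun hlt => hmb (hd m hm1 hlt)
      have hne : w m ≠ w (m + 1) := fun he => by
        have := w.injective he; omega
      omega
    · have : i = m + 1 := by omega
      subst this; exact le_refl _

lemma ell_le (n : ℕ) (w : Equiv.Perm ℕ) (b : ℕ)
    (hb1 : 1 ≤ b) (hb2 : b ≤ n - 1)
    (hd : ∀ i ∈ Finset.Icc 1 (n - 1), w (i + 1) < w i → i = b) :
    ell n w ≤ b * (n - b) := by
  have hsub : inversions n w ⊆ (Finset.Icc 1 b) ×ˢ (Finset.Icc (b + 1) n) := by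
    intro p hp
    simp only [inversions, Finset.mem_filter, Finset.mem_product, Finset.mem_Icc] at hp ⊢
    obtain ⟨⟨⟨hi1, hi2⟩, hj1, hj2⟩, hij, hinv⟩ := hp
    have key : p.1 ≤ b ∧ b < p.2 := by
      by_contra hcon
      push_neg at hcon
      have : ∀ k, p.1 ≤ k → k < p.2 → k ≠ b := by
        intro k hk1 hk2 hkb
        rcases Nat.lt_or_ge b p.1 with h | h
        · omega
        · have := hcon (by omega); omega
      have := chain_mono_s3 n w b hd p.1 p.2 hi1 hj2 (le_of_lt hij) this
      omega
    exact ⟨⟨hi1, key.1⟩, key.2, hj2⟩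
  calc ell n w ≤ ((Finset.Icc 1 b) ×ˢ (Finset.Icc (b + 1) n)).card :=
        Finset.card_le_card hsub
    _ = b * (n - b) := by
        rw [Finset.card_product, Nat.card_Icc, Nat.card_Icc]
        congr 1 <;> omega

/-- If Q is a meet-irreducible irreducible discrete copula on Lₙ (n ≥ 2), then
−1/(n−1) ≤ τ(Q) ≤ 1. -/
theorem tau_bigrassmannian_bounds (n : ℕ) (hn : 2 ≤ n) (w : Equiv.Perm ℕ)
    (hw : Supported n w) (hb : Bigrassmannian n w) :
    -(1 / ((n : ℝ) - 1)) ≤ tau n w ∧ tau n w ≤ 1 := by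
  obtain ⟨-, hr⟩ := hb
  obtain ⟨b, hbeq⟩ := Finset.card_eq_one.mp hr
  have hbmem : b ∈ rightDescents n w := by rw [hbeq]; simp
  have hbIcc : b ∈ Finset.Icc 1 (n - 1) := Finset.mem_filter.mp hbmem |>.1
  rw [Finset.mem_Icc] at hbIcc
  have hd : ∀ i ∈ Finset.Icc 1 (n - 1), w (i + 1) < w i → i = b := by
    intro i hi hlt
    have : i ∈ rightDescents n w := Finset.mem_filter.mpr ⟨hi, hlt⟩
    rw [hbeq] at this; simpa using this
  have hle : ell n w ≤ b * (n - b) := ell_le n w b hbIcc.1 hbIcc.2 hd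
  have hnat : 4 * ell n w ≤ n * n := by
    obtain ⟨c, hc⟩ : ∃ c, n = b + c := ⟨n - b, by omega⟩
    subst hc
    have hcc : b + c - b = c := by omega
    rw [hcc] at hle
    have h4 : 4 * (b * c) ≤ (b + c) * (b + c) := by nlinarith [two_mul_le_add_sq b c]
    calc 4 * ell (b + c) w ≤ 4 * (b * c) := Nat.mul_le_mul_left 4 hle
      _ ≤ (b + c) * (b + c) := h4
  have hN : (2 : ℝ) ≤ (n : ℝ) := by exact_mod_cast hn
  have hL : (0 : ℝ) ≤ (ell n w : ℝ) := Nat.cast_nonneg _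
  have h4L : 4 * (ell n w : ℝ) ≤ (n : ℝ) * (n : ℝ) := by exact_mod_cast hnat
  have hN1 : (0 : ℝ) < (n : ℝ) - 1 := by linarith
  have hD : (0 : ℝ) < (n : ℝ) * ((n : ℝ) - 1) / 2 := by positivity
  constructor
  · unfold tau
    have h : 2 * (ell n w : ℝ) / ((n : ℝ) * ((n : ℝ) - 1) / 2) ≤ 1 + 1 / ((n : ℝ) - 1) := by
      rw [div_le_iff₀ hD]
      have e : (1 + 1 / ((n : ℝ) - 1)) * ((n : ℝ) * ((n : ℝ) - 1) / 2)
          = (n : ℝ) * (n : ℝ) / 2 := by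
        field_simp
        ring
      rw [e]; linarith
    linarith
  · unfold tau
    have : 0 ≤ 2 * (ell n w : ℝ) / ((n : ℝ) * ((n : ℝ) - 1) / 2) :=
      div_nonneg (by linarith) (le_of_lt hD)
    linarith
end

section
/- The pointwise minimum of two irreducible discrete quasi-copulas on L_n is again an irreducible discrete quasi-copula, and it is the meet of the two in the entrywise (concordance) order. -/
/-- An irreducible discrete quasi-copula on Lₙ = {0,…,n}: boundary conditions
Q(i,0)=Q(0,i)=0, Q(i,n)=Q(n,i)=i, and consecutive differences in each row and
column lie in {0,1}.  (Values at arguments outside {0,…,n} are irrelevant.) -/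
def IsQuasiCopula (n : ℕ) (Q : ℕ → ℕ → ℤ) : Prop :=
  (∀ i ≤ n, Q i 0 = 0 ∧ Q 0 i = 0 ∧ Q i n = i ∧ Q n i = i) ∧
  (∀ i, 1 ≤ i → i ≤ n → ∀ j, 1 ≤ j → j ≤ n →
    (Q i j - Q (i - 1) j = 0 ∨ Q i j - Q (i - 1) j = 1) ∧
    (Q i j - Q i (j - 1) = 0 ∨ Q i j - Q i (j - 1) = 1))

/-- Concordance (entrywise) order on Lₙ × Lₙ. -/
def QCLe (n : ℕ) (P Q : ℕ → ℕ → ℤ) : Prop :=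
  ∀ i ≤ n, ∀ j ≤ n, P i j ≤ Q i j

/-- The pointwise minimum of two irreducible discrete quasi-copulas is again an
irreducible discrete quasi-copula, and it is their meet in concordance order. -/
theorem min_quasiCopula (n : ℕ) (P Q : ℕ → ℕ → ℤ)
    (hP : IsQuasiCopula n P) (hQ : IsQuasiCopula n Q) :
    IsQuasiCopula n (fun i j => min (P i j) (Q i j)) ∧
    QCLe n (fun i j => min (P i j) (Q i j)) P ∧
    QCLe n (fun i j => min (P i j) (Q i j)) Q ∧
    ∀ S : ℕ → ℕ → ℤ, IsQuasiCopula n S → QCLe n S P → QCLe n S Q →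
      QCLe n S (fun i j => min (P i j) (Q i j)) := by
  obtain ⟨hPb, hPd⟩ := hP
  obtain ⟨hQb, hQd⟩ := hQ
  refine ⟨⟨?_, ?_⟩, ?_, ?_, ?_⟩
  · intro i hi
    obtain ⟨p1, p2, p3, p4⟩ := hPb i hi
    obtain ⟨q1, q2, q3, q4⟩ := hQb i hi
    exact ⟨by simp [p1, q1], by simp [p2, q2], by simp [p3, q3], by simp [p4, q4]⟩
  · intro i hi1 hi2 j hj1 hj2
    obtain ⟨p1, p2⟩ := hPd i hi1 hi2 j hj1 hj2
    obtain ⟨q1, q2⟩ := hQd i hi1 hi2 j hj1 hj2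
    simp only
    omega
  · intro i _ j _; exact min_le_left _ _
  · intro i _ j _; exact min_le_right _ _
  · intro S _ hSP hSQ i hi j hj
    exact le_min (hSP i hi j hj) (hSQ i hi j hj)
end

section
/- The set Q_n of irreducible discrete quasi-copulas on L_n, ordered entrywise, is a lattice: any two elements have a meet (pointwise min) and a join (pointwise max). -/
/-- Q_n is a lattice: any two irreducible discrete quasi-copulas have a meet
(pointwise min) and a join (pointwise max) in concordance order. -/
theorem quasiCopulas_lattice (n : ℕ) (P Q : ℕ → ℕ → ℤ)
    (hP : IsQuasiCopula n P) (hQ : IsQuasiCopula n Q) :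
    (IsQuasiCopula n (fun i j => min (P i j) (Q i j)) ∧
      QCLe n (fun i j => min (P i j) (Q i j)) P ∧
      QCLe n (fun i j => min (P i j) (Q i j)) Q ∧
      ∀ S : ℕ → ℕ → ℤ, IsQuasiCopula n S → QCLe n S P → QCLe n S Q →
        QCLe n S (fun i j => min (P i j) (Q i j))) ∧
    (IsQuasiCopula n (fun i j => max (P i j) (Q i j)) ∧
      QCLe n P (fun i j => max (P i j) (Q i j)) ∧
      QCLe n Q (fun i j => max (P i j) (Q i j)) ∧
      ∀ S : ℕ → ℕ → ℤ, IsQuasiCopula n S → QCLe n P S → QCLe n Q S →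
        QCLe n (fun i j => max (P i j) (Q i j)) S) := by

  obtain ⟨hPb, hPd⟩ := hP
  obtain ⟨hQb, hQd⟩ := hQ
  refine ⟨⟨⟨?_, ?_⟩, ?_, ?_, ?_⟩, ⟨⟨?_, ?_⟩, ?_, ?_, ?_⟩⟩
  · intro i hi
    obtain ⟨p1, p2, p3, p4⟩ := hPb i hi
    obtain ⟨q1, q2, q3, q4⟩ := hQb i hi
    simp only [p1, p2, p3, p4, q1, q2, q3, q4, min_self, and_self]
  · intro i hi1 hin j hj1 hjn
    obtain ⟨pr, pc⟩ := hPd i hi1 hin j hj1 hjn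
    obtain ⟨qr, qc⟩ := hQd i hi1 hin j hj1 hjn
    constructor <;> simp only [] <;> omega
  · intro i _ j _; exact min_le_left _ _
  · intro i _ j _; exact min_le_right _ _
  · intro S _ hSP hSQ i hi j hj
    exact le_min (hSP i hi j hj) (hSQ i hi j hj)
  · intro i hi
    obtain ⟨p1, p2, p3, p4⟩ := hPb i hi
    obtain ⟨q1, q2, q3, q4⟩ := hQb i hi
    simp only [p1, p2, p3, p4, q1, q2, q3, q4, max_self, and_self]
  · intro i hi1 hin j hj1 hjn
    obtain ⟨pr, pc⟩ := hPd i hi1 hin j hj1 hjn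
    obtain ⟨qr, qc⟩ := hQd i hi1 hin j hj1 hjn
    constructor <;> simp only [] <;> omega
  · intro i _ j _; exact le_max_left _ _
  · intro i _ j _; exact le_max_right _ _
  · intro S _ hPS hQS i hi j hj
    exact max_le (hPS i hi j hj) (hQS i hi j hj)
end

section
/- A binary operation C on {0,…,n} is an irreducible discrete copula if and only if there exists a unique n×n permutation matrix A = (a_{ij}) such that C(r,s) = Σ_{i≤r, j≤s} a_{ij} for r,s ≥ 1 and C(r,0) = C(0,s) = 0; moreover then a_{ij} = C(i,j) + C(i−1,j−1) − C(i,j−1) − C(i−1,j). -/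
/-- An irreducible discrete copula on Lₙ = {0,…,n}: boundary conditions,
the 2-increasing property, and range contained in {0,…,n} (with integer
values, so that the range is exactly Lₙ).  Values at arguments outside
{0,…,n} are irrelevant. -/
def IsIrrCopula (n : ℕ) (C : ℕ → ℕ → ℤ) : Prop :=
  (∀ i ≤ n, C i 0 = 0 ∧ C 0 i = 0 ∧ C i n = i ∧ C n i = i) ∧
  (∀ i i', i ≤ i' → i' ≤ n → ∀ j j', j ≤ j' → j' ≤ n →
    C i j' + C i' j ≤ C i j + C i' j') ∧
  (∀ i ≤ n, ∀ j ≤ n, ∃ k : ℕ, k ≤ n ∧ C i j = k)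

/-- An n×n permutation matrix (indexed by [n]×[n], zero elsewhere). -/
def IsPermMatrix (n : ℕ) (A : ℕ → ℕ → ℤ) : Prop :=
  (∀ i j, (i ∉ Finset.Icc 1 n ∨ j ∉ Finset.Icc 1 n) → A i j = 0) ∧
  (∀ i ∈ Finset.Icc 1 n, ∀ j ∈ Finset.Icc 1 n, A i j = 0 ∨ A i j = 1) ∧
  (∀ i ∈ Finset.Icc 1 n, ∑ j ∈ Finset.Icc 1 n, A i j = 1) ∧
  (∀ j ∈ Finset.Icc 1 n, ∑ i ∈ Finset.Icc 1 n, A i j = 1)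

lemma telescope (g : ℕ → ℤ) (s : ℕ) :
    ∑ j ∈ Finset.Icc 1 s, (g j - g (j-1)) = g s - g 0 := by
  induction s with
  | zero => simp
  | succ s ih =>
    rw [Finset.sum_Icc_succ_top (by omega : 1 ≤ s+1), ih]
    have h : s + 1 - 1 = s := by omega
    rw [h]; ring

lemma rowTel (C : ℕ → ℕ → ℤ) (i s : ℕ) :
    ∑ j ∈ Finset.Icc 1 s, (C i j + C (i-1) (j-1) - C i (j-1) - C (i-1) j)
      = C i s - C (i-1) s - C i 0 + C (i-1) 0 := by
  calc ∑ j ∈ Finset.Icc 1 s, (C i j + C (i-1) (j-1) - C i (j-1) - C (i-1) j)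
      = ∑ j ∈ Finset.Icc 1 s,
        ((fun j => C i j - C (i-1) j) j - (fun j => C i j - C (i-1) j) (j-1)) := by
        apply Finset.sum_congr rfl; intro j _; simp only; ring
    _ = _ := by rw [telescope]; ring

lemma colTel (C : ℕ → ℕ → ℤ) (r j : ℕ) :
    ∑ i ∈ Finset.Icc 1 r, (C i j + C (i-1) (j-1) - C i (j-1) - C (i-1) j)
      = C r j - C r (j-1) - C 0 j + C 0 (j-1) := by
  calc ∑ i ∈ Finset.Icc 1 r, (C i j + C (i-1) (j-1) - C i (j-1) - C (i-1) j)
      = ∑ i ∈ Finset.Icc 1 r,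
        ((fun i => C i j - C i (j-1)) i - (fun i => C i j - C i (j-1)) (i-1)) := by
        apply Finset.sum_congr rfl; intro i _; simp only; ring
    _ = _ := by rw [telescope]; ring

lemma sumExpr (C : ℕ → ℕ → ℤ) (r s : ℕ) :
    ∑ i ∈ Finset.Icc 1 r, ∑ j ∈ Finset.Icc 1 s,
      (C i j + C (i-1) (j-1) - C i (j-1) - C (i-1) j)
      = C r s - C r 0 - C 0 s + C 0 0 := by
  calc ∑ i ∈ Finset.Icc 1 r, ∑ j ∈ Finset.Icc 1 s,
      (C i j + C (i-1) (j-1) - C i (j-1) - C (i-1) j)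
      = ∑ i ∈ Finset.Icc 1 r,
        ((fun i => C i s - C i 0) i - (fun i => C i s - C i 0) (i-1)) := by
        apply Finset.sum_congr rfl; intro i _; rw [rowTel]; simp only; ring
    _ = _ := by rw [telescope]; ring

/-- C is an irreducible discrete copula iff there is a unique permutation
matrix A whose partial sums give C; moreover then
a_{ij} = C(i,j) + C(i−1,j−1) − C(i,j−1) − C(i−1,j). -/
theorem irrCopula_iff_permMatrix (n : ℕ) (hn : 1 ≤ n) (C : ℕ → ℕ → ℤ) :
    IsIrrCopula n C ↔
    ∃! A : ℕ → ℕ → ℤ, IsPermMatrix n A ∧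
      (∀ r ≤ n, ∀ s ≤ n,
        C r s = ∑ i ∈ Finset.Icc 1 r, ∑ j ∈ Finset.Icc 1 s, A i j) ∧
      (∀ i, 1 ≤ i → i ≤ n → ∀ j, 1 ≤ j → j ≤ n →
        A i j = C i j + C (i - 1) (j - 1) - C i (j - 1) - C (i - 1) j) := by
  constructor
  · rintro ⟨h1, h2, _h3⟩
    set A : ℕ → ℕ → ℤ := fun i j =>
      if 1 ≤ i ∧ i ≤ n ∧ 1 ≤ j ∧ j ≤ n
      then C i j + C (i-1) (j-1) - C i (j-1) - C (i-1) j else 0 with hA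
    -- zero outside
    have hz : ∀ i j, (i ∉ Finset.Icc 1 n ∨ j ∉ Finset.Icc 1 n) → A i j = 0 := by
      intro i j hij
      simp only [Finset.mem_Icc] at hij
      simp only [hA]
      rw [if_neg]; omega
    -- nonneg
    have hnn : ∀ i j, 0 ≤ A i j := by
      intro i j
      simp only [hA]
      split_ifs with h
      · obtain ⟨hi1, hin, hj1, hjn⟩ := h
        have := h2 (i-1) i (by omega) hin (j-1) j (by omega) hjn
        omega
      · exact le_refl 0
    -- row sums
    have hrow : ∀ i ∈ Finset.Icc 1 n, ∑ j ∈ Finset.Icc 1 n, A i j = 1 := by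
      intro i hi
      simp only [Finset.mem_Icc] at hi
      have e : ∑ j ∈ Finset.Icc 1 n, A i j
          = ∑ j ∈ Finset.Icc 1 n, (C i j + C (i-1) (j-1) - C i (j-1) - C (i-1) j) := by
        apply Finset.sum_congr rfl
        intro j hj
        simp only [Finset.mem_Icc] at hj
        simp only [hA]
        rw [if_pos ⟨hi.1, hi.2, hj.1, hj.2⟩]
      rw [e, rowTel]
      obtain ⟨c1, -, c3, -⟩ := h1 i hi.2
      obtain ⟨c1', -, c3', -⟩ := h1 (i-1) (by omega)
      rw [c1, c1', c3, c3']
      have : ((i - 1 : ℕ) : ℤ) = (i : ℤ) - 1 := by omega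
      rw [this]; ring
    -- column sums
    have hcol : ∀ j ∈ Finset.Icc 1 n, ∑ i ∈ Finset.Icc 1 n, A i j = 1 := by
      intro j hj
      simp only [Finset.mem_Icc] at hj
      have e : ∑ i ∈ Finset.Icc 1 n, A i j
          = ∑ i ∈ Finset.Icc 1 n, (C i j + C (i-1) (j-1) - C i (j-1) - C (i-1) j) := by
        apply Finset.sum_congr rfl
        intro i hi
        simp only [Finset.mem_Icc] at hi
        simp only [hA]
        rw [if_pos ⟨hi.1, hi.2, hj.1, hj.2⟩]
      rw [e, colTel]
      obtain ⟨-, c2, -, c4⟩ := h1 j hj.2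
      obtain ⟨-, c2', -, c4'⟩ := h1 (j-1) (by omega)
      rw [c2, c2', c4, c4']
      have : ((j - 1 : ℕ) : ℤ) = (j : ℤ) - 1 := by omega
      rw [this]; ring
    -- 0/1 entries
    have h01 : ∀ i ∈ Finset.Icc 1 n, ∀ j ∈ Finset.Icc 1 n, A i j = 0 ∨ A i j = 1 := by
      intro i hi j hj
      have hle : A i j ≤ ∑ j' ∈ Finset.Icc 1 n, A i j' :=
        Finset.single_le_sum (fun j' _ => hnn i j') hj
      rw [hrow i hi] at hle
      have := hnn i j
      omega
    -- partial sums
    have hps : ∀ r ≤ n, ∀ s ≤ n,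
        C r s = ∑ i ∈ Finset.Icc 1 r, ∑ j ∈ Finset.Icc 1 s, A i j := by
      intro r hr s hs
      have e : ∑ i ∈ Finset.Icc 1 r, ∑ j ∈ Finset.Icc 1 s, A i j
          = ∑ i ∈ Finset.Icc 1 r, ∑ j ∈ Finset.Icc 1 s,
            (C i j + C (i-1) (j-1) - C i (j-1) - C (i-1) j) := by
        apply Finset.sum_congr rfl
        intro i hi
        apply Finset.sum_congr rfl
        intro j hj
        simp only [Finset.mem_Icc] at hi hj
        simp only [hA]
        rw [if_pos ⟨hi.1, by omega, hj.1, by omega⟩]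
      rw [e, sumExpr]
      have b1 := (h1 r hr).1
      have b2 := (h1 s hs).2.1
      have b3 := (h1 0 (by omega)).1
      rw [b1, b2, b3]; ring
    refine ⟨A, ⟨⟨hz, h01, hrow, hcol⟩, hps, ?_⟩, ?_⟩
    · intro i hi1 hin j hj1 hjn
      simp only [hA]
      rw [if_pos ⟨hi1, hin, hj1, hjn⟩]
    · rintro A' ⟨⟨hz', -, -, -⟩, -, hform'⟩
      funext i j
      by_cases hb : 1 ≤ i ∧ i ≤ n ∧ 1 ≤ j ∧ j ≤ n
      · obtain ⟨hi1, hin, hj1, hjn⟩ := hb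
        rw [hform' i hi1 hin j hj1 hjn]
        simp only [hA]
        rw [if_pos ⟨hi1, hin, hj1, hjn⟩]
      · have h0 : A' i j = 0 := by
          apply hz'
          simp only [Finset.mem_Icc]
          omega
        rw [h0]
        simp only [hA]
        rw [if_neg hb]
  · rintro ⟨A, ⟨⟨hz, h01, hrow, hcol⟩, hps, -⟩, -⟩
    have hnn : ∀ i j, 0 ≤ A i j := by
      intro i j
      by_cases hi : i ∈ Finset.Icc 1 n
      · by_cases hj : j ∈ Finset.Icc 1 n
        · rcases h01 i hi j hj with h | h <;> omega
        · rw [hz i j (Or.inr hj)]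
      · rw [hz i j (Or.inl hi)]
    -- split lemma for sums on rows
    have split : ∀ (f : ℕ → ℤ) (a b : ℕ), a ≤ b →
        ∑ i ∈ Finset.Icc 1 b, f i
          = ∑ i ∈ Finset.Icc 1 a, f i + ∑ i ∈ Finset.Ioc a b, f i := by
      intro f a b hab
      rw [show Finset.Icc 1 b = Finset.Ioc 0 b from (Finset.Icc_add_one_left_eq_Ioc 0 b).symm,
          show Finset.Icc 1 a = Finset.Ioc 0 a from (Finset.Icc_add_one_left_eq_Ioc 0 a).symm,
          Finset.sum_Ioc_consecutive _ (Nat.zero_le a) hab]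
    refine ⟨?_, ?_, ?_⟩
    · -- boundary
      intro i hi
      have e0 : C i 0 = 0 := by rw [hps i hi 0 (by omega)]; simp
      have e0' : C 0 i = 0 := by rw [hps 0 (by omega) i hi]; simp
      have en : C i n = i := by
        rw [hps i hi n le_rfl]
        rw [Finset.sum_congr rfl (fun i' hi' => hrow i'
          (by simp only [Finset.mem_Icc] at hi' ⊢; omega))]
        simp
      have en' : C n i = i := by
        rw [hps n le_rfl i hi, Finset.sum_comm]
        rw [Finset.sum_congr rfl (fun j' hj' => hcol j'
          (by simp only [Finset.mem_Icc] at hj' ⊢; omega))]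
        simp
      exact ⟨e0, e0', en, en'⟩
    · -- 2-increasing
      intro i i' hii' hi'n j j' hjj' hj'n
      rw [hps i (by omega) j' hj'n, hps i' hi'n j (by omega),
          hps i (by omega) j (by omega), hps i' hi'n j' hj'n]
      rw [split _ i i' hii', split _ i i' hii']
      have key : ∑ k ∈ Finset.Ioc i i', ∑ l ∈ Finset.Icc 1 j, A k l
          ≤ ∑ k ∈ Finset.Ioc i i', ∑ l ∈ Finset.Icc 1 j', A k l := by
        apply Finset.sum_le_sum
        intro k _
        apply Finset.sum_le_sum_of_subset_of_nonneg
        · exact Finset.Icc_subset_Icc_right hjj'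
        · intro l _ _; exact hnn k l
      linarith
    · -- range
      intro i hi j hj
      have hge : 0 ≤ C i j := by
        rw [hps i hi j hj]
        apply Finset.sum_nonneg
        intro k _
        exact Finset.sum_nonneg fun l _ => hnn k l
      have hle : C i j ≤ (i : ℤ) := by
        rw [hps i hi j hj]
        have en : (i : ℤ) = ∑ k ∈ Finset.Icc 1 i, ∑ l ∈ Finset.Icc 1 n, A k l := by
          rw [Finset.sum_congr rfl (fun k hk => hrow k
            (by simp only [Finset.mem_Icc] at hk ⊢; omega))]
          simp
        rw [en]
        apply Finset.sum_le_sum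
        intro k _
        apply Finset.sum_le_sum_of_subset_of_nonneg
        · exact Finset.Icc_subset_Icc_right hj
        · intro l _ _; exact hnn k l
      refine ⟨(C i j).toNat, ?_, ?_⟩
      · omega
      · rw [Int.toNat_of_nonneg hge]
end

section
/- The poset of irreducible discrete copulas on L_n under concordance order is isomorphic to the symmetric group S_n under reverse Bruhat order. -/
/-- w(r,s) = |{i ≤ r : w(i) ≤ s}|, the partial-sum matrix of w. -/
def wrs (w : Equiv.Perm ℕ) (r s : ℕ) : ℕ :=
  ((Finset.Icc 1 r).filter (fun i => w i ≤ s)).card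

/-- Reverse Bruhat order on Sₙ: v ≤' w iff v(r,s) ≤ w(r,s) for all r,s. -/
def RevBruhat (n : ℕ) (v w : Equiv.Perm ℕ) : Prop :=
  ∀ r ≤ n, ∀ s ≤ n, wrs v r s ≤ wrs w r s

namespace CopRB

variable {n : ℕ} {w v : Equiv.Perm ℕ}

lemma supp_fix (h : Supported n w) {k : ℕ} (hk : k ∉ Finset.Icc 1 n) : w k = k := by
  by_contra hc; exact hk (h k hc)

lemma supp_maps (h : Supported n w) {k : ℕ} (hk : k ∈ Finset.Icc 1 n) :
    w k ∈ Finset.Icc 1 n := by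
  by_contra hc
  have h1 : w (w k) = w k := supp_fix h hc
  have h2 : w k = k := w.injective h1
  rw [h2] at hc
  exact hc hk

lemma supp_inv (h : Supported n w) : Supported n w⁻¹ := by
  intro i hi
  apply h i
  intro he
  exact hi (Equiv.Perm.inv_eq_iff_eq.mpr he.symm)

lemma wrs_eq (w : Equiv.Perm ℕ) (r s : ℕ) :
    wrs w r s = ((Finset.Ioc 0 r).filter (fun i => w i ≤ s)).card := by
  unfold wrs
  rw [show (1:ℕ) = 0 + 1 from rfl, Finset.Icc_add_one_left_eq_Ioc]

lemma wrs_split (w : Equiv.Perm ℕ) {i i' : ℕ} (h : i ≤ i') (s : ℕ) :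
    wrs w i' s = wrs w i s + ((Finset.Ioc i i').filter (fun k => w k ≤ s)).card := by
  rw [wrs_eq, wrs_eq, ← Finset.Ioc_union_Ioc_eq_Ioc (Nat.zero_le i) h,
    Finset.filter_union]
  apply Finset.card_union_of_disjoint
  rw [Finset.disjoint_left]
  intro a ha hb
  simp only [Finset.mem_filter, Finset.mem_Ioc] at ha hb
  omega

lemma wrs_succ (w : Equiv.Perm ℕ) (k s : ℕ) :
    wrs w (k+1) s = wrs w k s + (if w (k+1) ≤ s then 1 else 0) := by
  rw [wrs_split w (Nat.le_succ k) s]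
  congr 1
  rw [show Finset.Ioc k (k+1) = {k+1} by rw [← Finset.Icc_add_one_left_eq_Ioc, Finset.Icc_self]]
  simp [Finset.filter_singleton]
  split <;> simp

lemma wrs_zero_left (w : Equiv.Perm ℕ) (s : ℕ) : wrs w 0 s = 0 := by
  simp [wrs]

lemma wrs_zero_right (h : Supported n w) (i : ℕ) : wrs w i 0 = 0 := by
  unfold wrs
  rw [Finset.card_eq_zero, Finset.filter_eq_empty_iff]
  intro k hk
  simp only [Nat.le_zero]
  intro hw
  have h0 : w 0 = 0 := supp_fix h (by simp)
  have : k = 0 := w.injective (by rw [hw, h0])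
  simp [Finset.mem_Icc] at hk; omega

lemma wrs_right_top (h : Supported n w) {i : ℕ} (hi : i ≤ n) : wrs w i n = i := by
  unfold wrs
  rw [Finset.filter_true_of_mem, Nat.card_Icc]
  · omega
  · intro k hk
    simp only [Finset.mem_Icc] at hk ⊢
    have := supp_maps h (k := k) (by simp [Finset.mem_Icc]; omega)
    simp [Finset.mem_Icc] at this; omega

lemma wrs_left_top (h : Supported n w) {j : ℕ} (hj : j ≤ n) : wrs w n j = j := by
  have key : ((Finset.Icc 1 n).filter (fun i => w i ≤ j)).card = (Finset.Icc 1 j).card := by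
    apply Finset.card_bij (fun k _ => w k)
    · intro k hk
      simp only [Finset.mem_filter, Finset.mem_Icc] at hk ⊢
      have h1 := supp_maps h (k := k) (by simp only [Finset.mem_Icc]; omega)
      simp only [Finset.mem_Icc] at h1
      omega
    · intro a ha b hb hab
      exact w.injective hab
    · intro m hm
      simp only [Finset.mem_Icc] at hm
      refine ⟨w⁻¹ m, ?_, by simp⟩
      have h1 := supp_maps (supp_inv h) (k := m) (by simp only [Finset.mem_Icc]; omega)
      have h2 : w (w⁻¹ m) = m := Equiv.apply_symm_apply w m
      simp only [Finset.mem_filter, Finset.mem_Icc] at h1 ⊢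
      refine ⟨h1, by omega⟩
  unfold wrs
  rw [key, Nat.card_Icc]
  omega

lemma wrs_twoinc (w : Equiv.Perm ℕ) {i i' j j' : ℕ} (h : i ≤ i') (hj : j ≤ j') :
    wrs w i j' + wrs w i' j ≤ wrs w i j + wrs w i' j' := by
  rw [wrs_split w h j, wrs_split w h j']
  have : ((Finset.Ioc i i').filter (fun k => w k ≤ j)).card ≤
      ((Finset.Ioc i i').filter (fun k => w k ≤ j')).card := by
    apply Finset.card_le_card
    intro x hx
    simp only [Finset.mem_filter] at hx ⊢
    exact ⟨hx.1, hx.2.trans hj⟩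
  omega

/-- The copula attached to a permutation. -/
def toC (n : ℕ) (w : Equiv.Perm ℕ) : ℕ → ℕ → ℤ :=
  fun i j => if i ≤ n ∧ j ≤ n then (wrs w i j : ℤ) else 0

lemma toC_spec (h : Supported n w) :
    IsIrrCopula n (toC n w) ∧ ∀ i j, (n < i ∨ n < j) → toC n w i j = 0 := by
  refine ⟨⟨?_, ?_, ?_⟩, ?_⟩
  · intro i hi
    simp only [toC, hi, Nat.zero_le, and_true, true_and, le_refl, if_true, and_self]
    refine ⟨?_, ?_, ?_, ?_⟩
    · simp [hi, wrs_zero_right h]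
    · simp [hi, wrs_zero_left]
    · simp [hi, wrs_right_top h hi]
    · simp [hi, wrs_left_top h hi]
  · intro i i' hii hi' j j' hjj hj'
    simp only [toC, hii.trans hi', hi', hjj.trans hj', hj', and_self, if_true, true_and,
      and_true]
    have := wrs_twoinc w hii hjj
    exact_mod_cast this
  · intro i hi j hj
    exact ⟨wrs w i j, by
      constructor
      · calc wrs w i j ≤ wrs w i n := by
              apply Finset.card_le_card
              intro x hx
              simp only [Finset.mem_filter] at hx ⊢
              exact ⟨hx.1, hx.2.trans hj⟩
          _ = i := wrs_right_top h hi
          _ ≤ n := hi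
      · simp [toC, hi, hj]⟩
  · intro i j hij
    simp only [toC]
    rw [if_neg]; omega

lemma toC_inj (hv : Supported n v) (hw : Supported n w)
    (h : ∀ r ≤ n, ∀ s ≤ n, wrs v r s = wrs w r s) : v = w := by
  have key : ∀ k ∈ Finset.Icc 1 n, ∀ s ≤ n, (v k ≤ s ↔ w k ≤ s) := by
    intro k hk s hs
    simp only [Finset.mem_Icc] at hk
    obtain ⟨m, rfl⟩ : ∃ m, k = m + 1 := ⟨k - 1, by omega⟩
    have h1 := wrs_succ v m s
    have h2 := wrs_succ w m s
    have e1 := h (m+1) (by omega) s hs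
    have e2 := h m (by omega) s hs
    by_cases hv1 : v (m+1) ≤ s <;> by_cases hw1 : w (m+1) ≤ s <;>
      simp [hv1, hw1] at h1 h2 ⊢ <;> omega
  ext k
  by_cases hk : k ∈ Finset.Icc 1 n
  · have hwk := supp_maps hw hk
    have hvk := supp_maps hv hk
    simp only [Finset.mem_Icc] at hwk hvk
    have h1 : v k ≤ w k := (key k hk (w k) hwk.2).2 le_rfl
    have h2 : w k ≤ v k := (key k hk (v k) hvk.2).1 le_rfl
    omega
  · rw [supp_fix hv hk, supp_fix hw hk]

lemma toC_surj (C : ℕ → ℕ → ℤ) (hC : IsIrrCopula n C) :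
    ∃ w : Equiv.Perm ℕ, Supported n w ∧ ∀ r ≤ n, ∀ s ≤ n, (wrs w r s : ℤ) = C r s := by
  classical
  obtain ⟨hb, h2, -⟩ := hC
  set g : ℕ → ℕ → ℤ := fun k j => C k j - C (k-1) j with hg
  have gmono : ∀ k, 1 ≤ k → k ≤ n → ∀ j j', j ≤ j' → j' ≤ n → g k j ≤ g k j' := by
    intro k hk1 hkn j j' hj hj'
    have := h2 (k-1) k (Nat.sub_le k 1) hkn j j' hj hj'
    simp only [hg]; linarith
  have g0 : ∀ k ≤ n, g k 0 = 0 := by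
    intro k hk
    have := (hb k hk).1
    have := (hb (k-1) (by omega)).1
    simp only [hg]; omega
  have gn : ∀ k, 1 ≤ k → k ≤ n → g k n = 1 := by
    intro k hk1 hkn
    have := (hb k hkn).2.2.1
    have := (hb (k-1) (by omega)).2.2.1
    simp only [hg]; omega
  have g01 : ∀ k, 1 ≤ k → k ≤ n → ∀ s ≤ n, g k s = 0 ∨ g k s = 1 := by
    intro k hk1 hkn s hs
    have h1 := gmono k hk1 hkn 0 s (by omega) hs
    have h2 := gmono k hk1 hkn s n hs le_rfl
    have := g0 k hkn
    have := gn k hk1 hkn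
    omega
  set σ : ℕ → ℕ := fun k => if k ∈ Finset.Icc 1 n then sInf {j | g k j = 1} else k with hσ
  have hmem : ∀ k, 1 ≤ k → k ≤ n → ({j | g k j = 1}).Nonempty := by
    intro k h1 h2; exact ⟨n, gn k h1 h2⟩
  have claim : ∀ k, 1 ≤ k → k ≤ n → ∀ s ≤ n, (σ k ≤ s ↔ g k s = 1) := by
    intro k hk1 hkn s hs
    have hkI : k ∈ Finset.Icc 1 n := by simp [Finset.mem_Icc]; omega
    simp only [hσ, if_pos hkI]
    constructor
    · intro hle
      have h1 : g k (sInf {j | g k j = 1}) = 1 := Nat.sInf_mem (hmem k hk1 hkn)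
      have h3 := gmono k hk1 hkn _ s hle hs
      have := g01 k hk1 hkn s hs
      omega
    · intro hgs
      exact Nat.sInf_le hgs
  have hσmaps : ∀ k, 1 ≤ k → k ≤ n → 1 ≤ σ k ∧ σ k ≤ n := by
    intro k hk1 hkn
    have hkI : k ∈ Finset.Icc 1 n := by simp [Finset.mem_Icc]; omega
    have hle : σ k ≤ n := by
      simp only [hσ, if_pos hkI]
      exact Nat.sInf_le (gn k hk1 hkn)
    refine ⟨?_, hle⟩
    by_contra hc
    have h0 : σ k = 0 := by omega
    have h1 : g k (σ k) = 1 := by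
      simp only [hσ, if_pos hkI]
      exact Nat.sInf_mem (hmem k hk1 hkn)
    rw [h0, g0 k hkn] at h1
    exact one_ne_zero h1.symm
  -- key indicator identity
  have claim3 : ∀ k, 1 ≤ k → k ≤ n → ∀ s ≤ n,
      ((if σ k ≤ s then (1:ℤ) else 0) = C k s - C (k-1) s) := by
    intro k hk1 hkn s hs
    by_cases hle : σ k ≤ s
    · rw [if_pos hle]
      have := (claim k hk1 hkn s hs).1 hle
      simp only [hg] at this; omega
    · rw [if_neg hle]
      have h1 : g k s ≠ 1 := fun h => hle ((claim k hk1 hkn s hs).2 h)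
      have := g01 k hk1 hkn s hs
      simp only [hg] at *; omega
  -- the A matrix and column sums
  have a_nonneg : ∀ k, 1 ≤ k → k ≤ n → ∀ m, 1 ≤ m → m ≤ n →
      0 ≤ g k m - g k (m-1) := by
    intro k hk1 hkn m hm1 hmn
    exact sub_nonneg.mpr (gmono k hk1 hkn (m-1) m (by omega) hmn)
  have colsum : ∀ m, 1 ≤ m → m ≤ n →
      ∑ i ∈ Finset.range n, (g (i+1) m - g (i+1) (m-1)) = 1 := by
    intro m hm1 hmn
    have : ∀ i, g (i+1) m - g (i+1) (m-1) =
        (fun k => C k m - C k (m-1)) (i+1) - (fun k => C k m - C k (m-1)) i := by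
      intro i; simp only [hg, Nat.add_sub_cancel]; ring
    simp only [this]
    rw [Finset.sum_range_sub (fun k => C k m - C k (m-1)) n]
    have e1 := (hb m hmn).2.2.2
    have e2 := (hb (m-1) (by omega)).2.2.2
    have e3 := (hb m hmn).2.1
    have e4 := (hb (m-1) (by omega)).2.1
    omega
  have aσ : ∀ k, 1 ≤ k → k ≤ n → g k (σ k) - g k (σ k - 1) = 1 := by
    intro k hk1 hkn
    obtain ⟨hσ1, hσn⟩ := hσmaps k hk1 hkn
    have h1 : g k (σ k) = 1 := (claim k hk1 hkn (σ k) hσn).1 le_rfl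
    have h2 : g k (σ k - 1) = 0 := by
      have hne : ¬ (σ k ≤ σ k - 1) := by omega
      have := fun h => hne ((claim k hk1 hkn (σ k - 1) (by omega)).2 h)
      have := g01 k hk1 hkn (σ k - 1) (by omega)
      tauto
    omega
  have σinjIcc : ∀ k, 1 ≤ k → k ≤ n → ∀ k', 1 ≤ k' → k' ≤ n → σ k = σ k' → k = k' := by
    intro k hk1 hkn k' hk1' hkn' he
    by_contra hne
    set m := σ k with hm
    obtain ⟨hm1, hmn⟩ := hσmaps k hk1 hkn
    have ha1 : g k m - g k (m-1) = 1 := aσ k hk1 hkn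
    have ha2 : g k' m - g k' (m-1) = 1 := he ▸ aσ k' hk1' hkn'
    have hsub : ({k-1, k'-1} : Finset ℕ) ⊆ Finset.range n := by
      intro x hx; simp at hx; simp; omega
    have hpair : ∑ i ∈ ({k-1, k'-1} : Finset ℕ), (g (i+1) m - g (i+1) (m-1)) = 2 := by
      rw [Finset.sum_pair (by omega)]
      rw [show k - 1 + 1 = k by omega, show k' - 1 + 1 = k' by omega]
      omega
    have hle := Finset.sum_le_sum_of_subset_of_nonneg hsub (by
      intro i hi _
      simp at hi
      exact a_nonneg (i+1) (by omega) (by omega) m hm1 hmn)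
    rw [hpair, colsum m hm1 hmn] at hle
    omega
  have σid : ∀ k, k ∉ Finset.Icc 1 n → σ k = k := by
    intro k hk; simp only [hσ, if_neg hk]
  have σmapsI : ∀ k, k ∈ Finset.Icc 1 n → σ k ∈ Finset.Icc 1 n := by
    intro k hk
    simp only [Finset.mem_Icc] at hk ⊢
    exact hσmaps k hk.1 hk.2
  have σinj : Function.Injective σ := by
    intro a b hab
    by_cases ha : a ∈ Finset.Icc 1 n <;> by_cases hb' : b ∈ Finset.Icc 1 n
    · simp only [Finset.mem_Icc] at ha hb'
      exact σinjIcc a ha.1 ha.2 b hb'.1 hb'.2 hab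
    · exfalso
      have := σmapsI a ha
      rw [hab, σid b hb'] at this
      exact hb' this
    · exfalso
      have := σmapsI b hb'
      rw [← hab, σid a ha] at this
      exact ha this
    · rwa [σid a ha, σid b hb'] at hab
  have σsurj : Function.Surjective σ := by
    intro m
    by_cases hm : m ∈ Finset.Icc 1 n
    · have := Finset.surj_on_of_inj_on_of_card_le (s := Finset.Icc 1 n) (t := Finset.Icc 1 n)
        (fun k _ => σ k) (fun a ha => σmapsI a ha)
        (fun a b ha hb he => σinj he) le_rfl m hm
      obtain ⟨a, _, ha⟩ := this
      exact ⟨a, ha.symm⟩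
    · exact ⟨m, σid m hm⟩
  have σbij : Function.Bijective σ := ⟨σinj, σsurj⟩
  refine ⟨Equiv.ofBijective σ σbij, ?_, ?_⟩
  · intro k hk
    by_contra hc
    exact hk (by simp [Equiv.ofBijective_apply, σid k hc])
  · intro r hr s hs
    induction r with
    | zero =>
      rw [wrs_zero_left]
      have := (hb s hs).2.1
      simp [this]
    | succ m ih =>
      rw [wrs_succ]
      have hC : (wrs (Equiv.ofBijective σ σbij) m s : ℤ) = C m s := ih (by omega)
      have h3 := claim3 (m+1) (by omega) hr s hs
      simp only [Equiv.ofBijective_apply]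
      push_cast
      rw [hC]
      rw [show (m+1) - 1 = m from rfl] at h3
      by_cases hle : σ (m+1) ≤ s
      · simp only [if_pos hle] at h3 ⊢; omega
      · simp only [if_neg hle] at h3 ⊢; omega

end CopRB

/-- The poset of irreducible discrete copulas on Lₙ under concordance order is
isomorphic to Sₙ under reverse Bruhat order: there is a bijection from Sₙ onto
the irreducible discrete copulas (normalized to vanish outside Lₙ × Lₙ) which
is an order isomorphism. -/
theorem copulas_iso_revBruhat (n : ℕ) :
    ∃ f : {w : Equiv.Perm ℕ // Supported n w} →
        {C : ℕ → ℕ → ℤ // IsIrrCopula n C ∧ ∀ i j, (n < i ∨ n < j) → C i j = 0},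
      Function.Bijective f ∧
      ∀ v w : {w : Equiv.Perm ℕ // Supported n w},
        RevBruhat n v.1 w.1 ↔ ∀ i ≤ n, ∀ j ≤ n, (f v).1 i j ≤ (f w).1 i j := by
  refine ⟨fun w => ⟨CopRB.toC n w.1, CopRB.toC_spec w.2⟩, ⟨?_, ?_⟩, ?_⟩
  · intro v w h
    simp only [Subtype.mk.injEq] at h
    apply Subtype.ext
    apply CopRB.toC_inj v.2 w.2
    intro r hr s hs
    have := congrFun (congrFun h r) s
    simp only [CopRB.toC, hr, hs, and_self, if_true] at this
    exact_mod_cast this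
  · rintro ⟨C, hC, hz⟩
    obtain ⟨w, hw, hwC⟩ := CopRB.toC_surj C hC
    refine ⟨⟨w, hw⟩, Subtype.ext ?_⟩
    funext i j
    simp only [CopRB.toC]
    by_cases h : i ≤ n ∧ j ≤ n
    · rw [if_pos h]; exact hwC i h.1 j h.2
    · rw [if_neg h]
      exact (hz i j (by omega)).symm
  · intro v w
    constructor
    · intro h i hi j hj
      simp only [CopRB.toC, hi, hj, and_self, if_true]
      exact_mod_cast h i hi j hj
    · intro h r hr s hs
      have := h r hr s hs
      simp only [CopRB.toC, hr, hs, and_self, if_true] at this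
      exact_mod_cast this
end

section
/- If w ∈ S_n has exactly one right descent k and exactly one left descent, then there is at most one index i with 1 ≤ i ≤ k−1 and w(i+1) − w(i) > 1, and at most one index i with k+2 ≤ i ≤ n and w(i) − w(i−1) > 1. -/
/-- If w ∈ Sₙ has exactly one right descent k and exactly one left descent,
then there is at most one index i with 1 ≤ i ≤ k−1 and w(i+1) − w(i) > 1, and
at most one index i with k+2 ≤ i ≤ n and w(i) − w(i−1) > 1. -/
theorem gaps_at_most_one (n : ℕ) (w : Equiv.Perm ℕ) (hw : Supported n w)
    (k : ℕ) (hR : rightDescents n w = {k}) (hL : (leftDescents n w).card = 1) :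
    ((Finset.Icc 1 (k - 1)).filter (fun i => w i + 1 < w (i + 1))).card ≤ 1 ∧
    ((Finset.Icc (k + 2) n).filter (fun i => w (i - 1) + 1 < w i)).card ≤ 1 := by
  classical
  have hkmem : k ∈ rightDescents n w := by rw [hR]; exact Finset.mem_singleton_self k
  rw [rightDescents, Finset.mem_filter, Finset.mem_Icc] at hkmem
  obtain ⟨⟨hk1, hk2⟩, hkd⟩ := hkmem
  have hn2 : 2 ≤ n := by omega
  have asc : ∀ i, 1 ≤ i → i + 1 ≤ n → i ≠ k → w i < w (i + 1) := by
    intro i h1 h2 hne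
    have hnot : i ∉ rightDescents n w := by rw [hR]; simpa using hne
    rw [rightDescents, Finset.mem_filter, Finset.mem_Icc] at hnot
    push_neg at hnot
    have hle := hnot ⟨h1, by omega⟩
    have hne2 : w i ≠ w (i + 1) := fun h => by
      have := w.injective h; omega
    omega
  have mono1 : ∀ i i', 1 ≤ i → i < i' → i' ≤ k → w i < w i' := by
    intro i i' h1 h2
    induction i', h2 using Nat.le_induction with
    | base => intro h3; exact asc i h1 (by omega) (by omega)
    | succ m hm ih =>
        intro h3
        have h4 : w m < w (m + 1) := asc m (by omega) (by omega) (by omega)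
        exact lt_trans (ih (by omega)) h4
  have mono2 : ∀ i i', k + 1 ≤ i → i < i' → i' ≤ n → w i < w i' := by
    intro i i' h1 h2
    induction i', h2 using Nat.le_induction with
    | base => intro h3; exact asc i (by omega) (by omega) (by omega)
    | succ m hm ih =>
        intro h3
        have h4 : w m < w (m + 1) := asc m (by omega) (by omega) (by omega)
        exact lt_trans (ih (by omega)) h4
  have maps : ∀ i, 1 ≤ i → i ≤ n → 1 ≤ w i ∧ w i ≤ n := by
    intro i h1 h2
    by_cases h : w i = i
    · rw [h]; exact ⟨h1, h2⟩
    · have hne : w (w i) ≠ w i := fun hc => h (w.injective hc)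
      have := hw (w i) hne
      rw [Finset.mem_Icc] at this; exact this
  have maps_inv : ∀ i, 1 ≤ i → i ≤ n → 1 ≤ w⁻¹ i ∧ w⁻¹ i ≤ n := by
    intro i h1 h2
    by_cases h : w⁻¹ i = i
    · rw [h]; exact ⟨h1, h2⟩
    · have hne : w (w⁻¹ i) ≠ w⁻¹ i := by
        rw [show w (w⁻¹ i) = i from w.apply_symm_apply i]; exact fun hc => h hc.symm
      have := hw (w⁻¹ i) hne
      rw [Finset.mem_Icc] at this; exact this
  constructor
  · -- first run
    have hmap : ∀ i ∈ (Finset.Icc 1 (k - 1)).filter (fun i => w i + 1 < w (i + 1)),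
        w (i + 1) - 1 ∈ leftDescents n w := by
      intro i hi
      rw [Finset.mem_filter, Finset.mem_Icc] at hi
      obtain ⟨⟨h1, h2⟩, hgap⟩ := hi
      have hik : i + 1 ≤ k := by omega
      have hwi := maps i h1 (by omega)
      have hwi1 := maps (i + 1) (by omega) (by omega)
      have hv1 : (w (i + 1) - 1) + 1 = w (i + 1) := by omega
      have hvi : w i < w (i + 1) - 1 := by omega
      have hp := maps_inv (w (i + 1) - 1) (by omega) (by omega)
      have hwp : w (w⁻¹ (w (i + 1) - 1)) = w (i + 1) - 1 := w.apply_symm_apply _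
      have hpk : k < w⁻¹ (w (i + 1) - 1) := by
        by_contra hle
        push_neg at hle
        rcases lt_trichotomy (w⁻¹ (w (i + 1) - 1)) i with h | h | h
        · have := mono1 (w⁻¹ (w (i + 1) - 1)) i hp.1 h (by omega)
          omega
        · rw [h] at hwp; omega
        · rcases eq_or_lt_of_le (show i + 1 ≤ w⁻¹ (w (i + 1) - 1) by omega) with h' | h'
          · rw [← h'] at hwp; omega
          · have := mono1 (i + 1) (w⁻¹ (w (i + 1) - 1)) (by omega) h' hle
            omega
      rw [leftDescents, rightDescents, Finset.mem_filter, Finset.mem_Icc]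
      refine ⟨⟨by omega, by omega⟩, ?_⟩
      have heq : w⁻¹ ((w (i + 1) - 1) + 1) = i + 1 := by
        rw [hv1]; exact w.symm_apply_apply (i + 1)
      rw [heq]
      omega
    have hinj : Set.InjOn (fun i => w (i + 1) - 1)
        ((Finset.Icc 1 (k - 1)).filter (fun i => w i + 1 < w (i + 1))) := by
      intro i hi i' hi' heq
      simp only [Finset.coe_filter, Set.mem_setOf_eq, Finset.mem_Icc] at hi hi'
      have h1 : w (i + 1) = w (i' + 1) := by
        simp only at heq
        omega
      have := w.injective h1
      omega
    calc ((Finset.Icc 1 (k - 1)).filter (fun i => w i + 1 < w (i + 1))).card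
        ≤ (leftDescents n w).card := Finset.card_le_card_of_injOn _ hmap hinj
      _ = 1 := hL
  · -- second run
    have hmap : ∀ i ∈ (Finset.Icc (k + 2) n).filter (fun i => w (i - 1) + 1 < w i),
        w (i - 1) ∈ leftDescents n w := by
      intro i hi
      rw [Finset.mem_filter, Finset.mem_Icc] at hi
      obtain ⟨⟨h1, h2⟩, hgap⟩ := hi
      have hwi := maps i (by omega) h2
      have hwi1 := maps (i - 1) (by omega) (by omega)
      have hp := maps_inv (w (i - 1) + 1) (by omega) (by omega)
      have hwp : w (w⁻¹ (w (i - 1) + 1)) = w (i - 1) + 1 := w.apply_symm_apply _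
      have hpk : w⁻¹ (w (i - 1) + 1) ≤ k := by
        by_contra hle
        push_neg at hle
        rcases lt_trichotomy (w⁻¹ (w (i - 1) + 1)) (i - 1) with h | h | h
        · have := mono2 (w⁻¹ (w (i - 1) + 1)) (i - 1) (by omega) h (by omega)
          omega
        · rw [h] at hwp; omega
        · rcases Nat.eq_or_lt_of_le (show i ≤ w⁻¹ (w (i - 1) + 1) by omega) with h' | h'
          · rw [← h'] at hwp; omega
          · have := mono2 i (w⁻¹ (w (i - 1) + 1)) (by omega) h' hp.2
            omega
      rw [leftDescents, rightDescents, Finset.mem_filter, Finset.mem_Icc]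
      refine ⟨⟨by omega, by omega⟩, ?_⟩
      have heq : w⁻¹ (w (i - 1)) = i - 1 := w.symm_apply_apply (i - 1)
      rw [heq]
      omega
    have hinj : Set.InjOn (fun i => w (i - 1))
        ((Finset.Icc (k + 2) n).filter (fun i => w (i - 1) + 1 < w i)) := by
      intro i hi i' hi' heq
      simp only [Finset.coe_filter, Set.mem_setOf_eq, Finset.mem_Icc] at hi hi'
      simp only at heq
      have := w.injective heq
      omega
    calc ((Finset.Icc (k + 2) n).filter (fun i => w (i - 1) + 1 < w i)).card
        ≤ (leftDescents n w).card := Finset.card_le_card_of_injOn _ hmap hinj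
      _ = 1 := hL
end

section
/- The number of meet-irreducible (bigrassmannian) permutations in S_n equals (n−1)n(n+1)/6. -/
theorem Equiv.Perm.apply_inv_self {α : Type*} (f : Equiv.Perm α) (x : α) : f (f⁻¹ x) = x :=
  Equiv.apply_symm_apply f x

theorem Equiv.Perm.inv_apply_self {α : Type*} (f : Equiv.Perm α) (x : α) : f⁻¹ (f x) = x :=
  Equiv.symm_apply_apply f x

/-! ### The model bigrassmannian permutations -/

def bgFun (a b c : ℕ) (x : ℕ) : ℕ :=
  if x ≤ a ∨ a + b + c < x then x else if x ≤ a + b then x + c else x - b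

def bg (a b c : ℕ) : Equiv.Perm ℕ where
  toFun := bgFun a b c
  invFun := bgFun a c b
  left_inv := by intro x; unfold bgFun; split_ifs <;> omega
  right_inv := by intro x; unfold bgFun; split_ifs <;> omega

lemma bg_inv (a b c : ℕ) : (bg a b c)⁻¹ = bg a c b := rfl

lemma bg_apply (a b c x : ℕ) :
    bg a b c x = if x ≤ a ∨ a + b + c < x then x else if x ≤ a + b then x + c else x - b := rfl

lemma bg_supported (n a b c : ℕ) (hn : a + b + c ≤ n) : Supported n (bg a b c) := by
  intro i hi
  rw [bg_apply] at hi
  rw [Finset.mem_Icc]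
  split_ifs at hi <;> omega

lemma bg_rightDescents (n a b c : ℕ) (hb : 1 ≤ b) (hc : 1 ≤ c) (hn : a + b + c ≤ n) :
    rightDescents n (bg a b c) = {a + b} := by
  ext i
  rw [rightDescents, Finset.mem_filter, Finset.mem_Icc, Finset.mem_singleton]
  simp only [bg_apply]
  constructor
  · rintro ⟨⟨h1, h2⟩, h3⟩
    split_ifs at h3 <;> omega
  · rintro rfl
    refine ⟨⟨by omega, by omega⟩, ?_⟩
    split_ifs <;> omega

lemma bg_leftDescents (n a b c : ℕ) (hb : 1 ≤ b) (hc : 1 ≤ c) (hn : a + b + c ≤ n) :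
    leftDescents n (bg a b c) = {a + c} := by
  rw [leftDescents, bg_inv]
  exact bg_rightDescents n a c b hc hb (by omega)

set_option maxHeartbeats 1000000 in
lemma bg_inj {a b c a' b' c' : ℕ} (hb : 1 ≤ b) (hc : 1 ≤ c) (hb' : 1 ≤ b') (hc' : 1 ≤ c')
    (h : bg a b c = bg a' b' c') : a = a' ∧ b = b' ∧ c = c' := by
  have h1 := Equiv.ext_iff.mp h (a + 1)
  have h2 := Equiv.ext_iff.mp h (a' + 1)
  have h3 := Equiv.ext_iff.mp h (a + b + c)
  simp only [bg_apply] at h1 h2 h3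
  split_ifs at h1 h2 h3 <;> omega

/-! ### Generic structure lemmas -/

lemma chain (g : ℕ → ℕ) (lo hi : ℕ) (h : ∀ i, lo ≤ i → i < hi → g i < g (i + 1)) :
    ∀ x y, lo ≤ x → x ≤ y → y ≤ hi → g x + (y - x) ≤ g y := by
  intro x y hx hxy hy
  induction y with
  | zero => interval_cases x; simp
  | succ m ih =>
    rcases Nat.eq_or_lt_of_le hxy with h1 | h1
    · subst h1; omega
    · have h2 := h m (by omega) (by omega)
      have h3 := ih (by omega) (by omega)
      omega

lemma fix_out {n : ℕ} {w : Equiv.Perm ℕ} (hs : Supported n w) (i : ℕ)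
    (hi : i ∉ Finset.Icc 1 n) : w i = i := by
  by_contra h; exact hi (hs i h)

lemma maps_in {n : ℕ} {w : Equiv.Perm ℕ} (hs : Supported n w) {i : ℕ}
    (hi : i ∈ Finset.Icc 1 n) : w i ∈ Finset.Icc 1 n := by
  by_contra h
  have h2 : w (w i) = w i := fix_out hs _ h
  have := w.injective h2
  rw [this] at h; exact h hi

lemma supported_inv {n : ℕ} {w : Equiv.Perm ℕ} (hs : Supported n w) : Supported n w⁻¹ := by
  intro i hi
  apply hs
  intro h2
  apply hi
  rw [← h2, Equiv.Perm.inv_apply_self]; exact h2.symm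

lemma fix_init {n : ℕ} {w : Equiv.Perm ℕ} (hs : Supported n w) {d : ℕ}
    (hd1 : 1 ≤ d) (hdn : d + 1 ≤ n)
    (hmono : ∀ i, 1 ≤ i → i < n → i ≠ d → w i < w (i + 1)) :
    ∀ x, x + 1 ≤ w (d + 1) → w x = x := by
  intro x
  induction x using Nat.strong_induction_on with
  | _ x ih =>
    intro hx
    rcases Nat.eq_zero_or_pos x with rfl | hx1
    · exact fix_out hs 0 (by simp)
    · have hwd1 : w (d + 1) ≤ n := by
        have := maps_in hs (i := d + 1) (by rw [Finset.mem_Icc]; omega)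
        rw [Finset.mem_Icc] at this; omega
      set p := w⁻¹ x with hp
      have hwp : w p = x := w.apply_inv_self x
      have hpx : x ≤ p := by
        by_contra h
        push_neg at h
        have := ih p h (by omega)
        rw [this] at hwp; omega
      have hpn : p ≤ n := by
        have := maps_in (supported_inv hs) (i := x) (by rw [Finset.mem_Icc]; omega)
        rw [Finset.mem_Icc] at this; exact this.2
      have hpd : p ≤ d := by
        by_contra h
        push_neg at h
        have := chain w (d + 1) n (fun i h1 h2 => hmono i (by omega) h2 (by omega))
          (d + 1) p (by omega) (by omega) hpn
        omega
      have hpx2 : p ≤ x := by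
        by_contra h
        push_neg at h
        have h2 := chain w 1 d (fun i h1 h2 => hmono i h1 (by omega) (by omega))
          x p hx1 (by omega) hpd
        have h3 : w x < x := by omega
        have h4 := ih (w x) h3 (by omega)
        have := w.injective h4
        omega
      have hfin : p = x := le_antisymm hpx2 hpx
      rw [hfin] at hwp; exact hwp

lemma fix_top {n : ℕ} {w : Equiv.Perm ℕ} (hs : Supported n w) {d : ℕ}
    (hd1 : 1 ≤ d) (hdn : d + 1 ≤ n)
    (hmono : ∀ i, 1 ≤ i → i < n → i ≠ d → w i < w (i + 1)) :
    ∀ x, w d < x → w x = x := by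
  suffices h : ∀ k x, n < x + k → w d < x → w x = x by
    intro x hx
    exact h (n + 1) x (by omega) hx
  intro k
  induction k with
  | zero => intro x h1 h2; exact fix_out hs x (by rw [Finset.mem_Icc]; omega)
  | succ k ih =>
    intro x h1 h2
    rcases Nat.lt_or_ge n (x + k) with h3 | h3
    · exact ih x h3 h2
    have hxn : x ≤ n := by omega
    have hx1 : 1 ≤ x := by
      have := maps_in hs (i := d) (by rw [Finset.mem_Icc]; omega)
      rw [Finset.mem_Icc] at this; omega
    set p := w⁻¹ x with hp
    have hwp : w p = x := w.apply_inv_self x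
    have hpx : p ≤ x := by
      by_contra h
      push_neg at h
      have := ih p (by omega) (by omega)
      rw [this] at hwp; omega
    have hp1 : 1 ≤ p := by
      have := maps_in (supported_inv hs) (i := x) (by rw [Finset.mem_Icc]; omega)
      rw [Finset.mem_Icc] at this; exact this.1
    have hpd : d + 1 ≤ p := by
      by_contra h
      push_neg at h
      have := chain w 1 d (fun i u1 u2 => hmono i u1 (by omega) (by omega))
        p d hp1 (by omega) le_rfl
      omega
    have hpx2 : x ≤ p := by
      by_contra h
      push_neg at h
      have h4 := chain w (d + 1) n (fun i u1 u2 => hmono i (by omega) u2 (by omega))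
        p x hpd (by omega) hxn
      have h5 : x < w x := by omega
      have h6 := ih (w x) (by
        have := maps_in hs (i := x) (by rw [Finset.mem_Icc]; omega)
        rw [Finset.mem_Icc] at this; omega) (by omega)
      have := w.injective h6
      omega
    have hfin : p = x := le_antisymm hpx hpx2
    rw [hfin] at hwp; exact hwp

lemma adata {n : ℕ} {w : Equiv.Perm ℕ} (hs : Supported n w) {d : ℕ}
    (hd1 : 1 ≤ d) (hdn : d + 1 ≤ n) (hdes : w (d + 1) < w d)
    (hmono : ∀ i, 1 ≤ i → i < n → i ≠ d → w i < w (i + 1)) :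
    1 ≤ w (d + 1) ∧ w (d + 1) ≤ d ∧ w (w (d + 1)) ≠ w (d + 1) := by
  have h1 : 1 ≤ w (d + 1) := by
    have := maps_in hs (i := d + 1) (by rw [Finset.mem_Icc]; omega)
    rw [Finset.mem_Icc] at this; omega
  have h2 : w (d + 1) ≤ d := by
    by_contra h
    push_neg at h
    have := fix_init hs hd1 hdn hmono d (by omega)
    omega
  refine ⟨h1, h2, ?_⟩
  intro h
  have := w.injective h
  omega

lemma middle {n : ℕ} {w : Equiv.Perm ℕ} (hs : Supported n w) (d e a : ℕ)
    (hdn : d + 1 ≤ n)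
    (hm1 : ∀ i, 1 ≤ i → i < d → w i < w (i + 1))
    (hm2 : ∀ i, e + 1 ≤ i → i < n → w⁻¹ i < w⁻¹ (i + 1))
    (hwa : w⁻¹ (e + 1) = a + 1) (ha : a ≤ e) :
    ∀ x, a < x → x ≤ d → w x = x + (e - a) := by
  have hwa1 : w (a + 1) = e + 1 := by rw [← hwa, Equiv.Perm.apply_inv_self]
  intro x hax hxd
  have h1 := chain w 1 d hm1 (a + 1) x (by omega) (by omega) hxd
  have hwxn : w x ≤ n := by
    have := maps_in hs (i := x) (by rw [Finset.mem_Icc]; omega)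
    rw [Finset.mem_Icc] at this; omega
  have h2 := chain (fun i => w⁻¹ i) (e + 1) n hm2 (e + 1) (w x) le_rfl (by omega) hwxn
  simp only [Equiv.Perm.inv_apply_self] at h2
  omega

lemma converse {n : ℕ} {w : Equiv.Perm ℕ} (hs : Supported n w)
    (hL : (leftDescents n w).card = 1) (hR : (rightDescents n w).card = 1) :
    ∃ a b c, 1 ≤ b ∧ 1 ≤ c ∧ a + b + c ≤ n ∧ w = bg a b c := by
  obtain ⟨d, hd⟩ := Finset.card_eq_one.mp hR
  obtain ⟨e, he⟩ := Finset.card_eq_one.mp hL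
  have hdmem : d ∈ rightDescents n w := hd ▸ Finset.mem_singleton_self d
  rw [leftDescents] at he
  have hemem : e ∈ rightDescents n w⁻¹ := he ▸ Finset.mem_singleton_self e
  rw [rightDescents, Finset.mem_filter, Finset.mem_Icc] at hdmem hemem
  obtain ⟨⟨hd1, hdn'⟩, hddes⟩ := hdmem
  obtain ⟨⟨he1, hen'⟩, hedes⟩ := hemem
  have hdn : d + 1 ≤ n := by omega
  have hen : e + 1 ≤ n := by omega
  have hmw : ∀ i, 1 ≤ i → i < n → i ≠ d → w i < w (i + 1) := by
    intro i h1 h2 h3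
    have : i ∉ rightDescents n w := by rw [hd, Finset.mem_singleton]; exact h3
    rw [rightDescents, Finset.mem_filter, Finset.mem_Icc] at this
    push_neg at this
    have h4 := this ⟨h1, by omega⟩
    have h5 : w i ≠ w (i + 1) := fun hh => by have := w.injective hh; omega
    omega
  have hmi : ∀ i, 1 ≤ i → i < n → i ≠ e → w⁻¹ i < w⁻¹ (i + 1) := by
    intro i h1 h2 h3
    have : i ∉ rightDescents n w⁻¹ := by rw [he, Finset.mem_singleton]; exact h3
    rw [rightDescents, Finset.mem_filter, Finset.mem_Icc] at this
    push_neg at this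
    have h4 := this ⟨h1, by omega⟩
    have h5 : w⁻¹ i ≠ w⁻¹ (i + 1) := fun hh => by have := w⁻¹.injective hh; omega
    omega
  have hsi : Supported n w⁻¹ := supported_inv hs
  obtain ⟨ha1, ha2, ha3⟩ := adata hs hd1 hdn hddes hmw
  obtain ⟨hb1, hb2, hb3⟩ := adata hsi he1 hen hedes hmi
  have hfixw : ∀ x, x + 1 ≤ w (d + 1) → w x = x := fix_init hs hd1 hdn hmw
  have hfixi : ∀ x, x + 1 ≤ w⁻¹ (e + 1) → w⁻¹ x = x := fix_init hsi he1 hen hmi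
  have haa : w (d + 1) = w⁻¹ (e + 1) := by
    rcases Nat.lt_trichotomy (w (d + 1)) (w⁻¹ (e + 1)) with h | h | h
    · have h1 := hfixi (w (d + 1)) (by omega)
      have h2 : w (w (d + 1)) = w (d + 1) := by
        conv_lhs => rw [← h1]
        exact w.apply_inv_self _
      exact absurd h2 ha3
    · exact h
    · have h1 := hfixw (w⁻¹ (e + 1)) (by omega)
      have h2 : w⁻¹ (w⁻¹ (e + 1)) = w⁻¹ (e + 1) := by
        conv_lhs => rw [← h1, Equiv.Perm.inv_apply_self]
      exact absurd h2 hb3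
  set a := w (d + 1) - 1 with hadef
  have hwd1 : w (d + 1) = a + 1 := by omega
  have hie1 : w⁻¹ (e + 1) = a + 1 := by omega
  have had : a < d := by omega
  have hae : a < e := by omega
  have hmid := middle hs d e a hdn (fun i u1 u2 => hmw i u1 (by omega) (by omega))
    (fun i u1 u2 => hmi i (by omega) u2 (by omega)) hie1 (by omega)
  have hmid2 : ∀ y, a < y → y ≤ e → w⁻¹ y = y + (d - a) := by
    have := middle (w := w⁻¹) hsi e d a hen
      (fun i u1 u2 => hmi i u1 (by omega) (by omega))
      (fun i u1 u2 => by
        simp only [inv_inv]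
        exact hmw i (by omega) u2 (by omega))
      (by simp only [inv_inv]; exact hwd1) (by omega)
    exact this
  have hwd : w d = d + (e - a) := hmid d (by omega) le_rfl
  have htop : ∀ x, d + (e - a) < x → w x = x := by
    intro x hx
    exact fix_top hs hd1 hdn hmw x (by omega)
  have hreg3 : ∀ x, d < x → x ≤ d + (e - a) → w x = x - (d - a) := by
    intro x h1 h2
    have hy := hmid2 (x - (d - a)) (by omega) (by omega)
    have hx' : x - (d - a) + (d - a) = x := by omega
    rw [hx'] at hy
    have h5 := congrArg w hy
    rw [Equiv.Perm.apply_inv_self] at h5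
    omega
  have hsn : d + (e - a) ≤ n := by
    have := maps_in hs (i := d) (by rw [Finset.mem_Icc]; omega)
    rw [Finset.mem_Icc, hwd] at this; omega
  refine ⟨a, d - a, e - a, by omega, by omega, by omega, ?_⟩
  apply Equiv.ext
  intro x
  rw [bg_apply]
  split_ifs with h1 h2
  · rcases h1 with h1 | h1
    · exact hfixw x (by omega)
    · exact htop x (by omega)
  · push_neg at h1
    rw [hmid x (by omega) (by omega)]
  · push_neg at h1 h2
    rw [hreg3 x (by omega) (by omega)]

/-! ### Counting -/

def T (n : ℕ) : Finset (ℕ × ℕ × ℕ) :=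
  ((Finset.range (n + 1)) ×ˢ (Finset.range (n + 1)) ×ˢ (Finset.range (n + 1))).filter
    (fun p => 1 ≤ p.2.1 ∧ 1 ≤ p.2.2 ∧ p.1 + p.2.1 + p.2.2 ≤ n)

lemma mem_T {n : ℕ} {p : ℕ × ℕ × ℕ} :
    p ∈ T n ↔ 1 ≤ p.2.1 ∧ 1 ≤ p.2.2 ∧ p.1 + p.2.1 + p.2.2 ≤ n := by
  simp only [T, Finset.mem_filter, Finset.mem_product, Finset.mem_range]
  omega

lemma card_T (n : ℕ) : (T n).card = (n + 1).choose 3 := by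
  have h := Finset.card_powersetCard 3 (Finset.range (n + 1))
  rw [Finset.card_range] at h
  rw [← h]
  apply Finset.card_bij (fun p _ => ({p.1, p.1 + p.2.1, p.1 + p.2.1 + p.2.2} : Finset ℕ))
  · rintro ⟨a, b, c⟩ hp
    rw [mem_T] at hp
    dsimp only at hp
    rw [Finset.mem_powersetCard]
    constructor
    · intro t ht
      simp only [Finset.mem_insert, Finset.mem_singleton] at ht
      rw [Finset.mem_range]
      omega
    · exact Finset.card_eq_three.mpr ⟨a, a + b, a + b + c, by omega, by omega, by omega, rfl⟩
  · rintro ⟨a, b, c⟩ hp ⟨a', b', c'⟩ hq h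
    rw [mem_T] at hp hq
    dsimp only at hp hq
    dsimp only at h
    have m1 : a = a' ∨ a = a' + b' ∨ a = a' + b' + c' := by
      have : a ∈ ({a', a' + b', a' + b' + c'} : Finset ℕ) := by rw [← h]; simp
      simpa using this
    have m2 : a + b = a' ∨ a + b = a' + b' ∨ a + b = a' + b' + c' := by
      have : a + b ∈ ({a', a' + b', a' + b' + c'} : Finset ℕ) := by rw [← h]; simp
      simpa using this
    have m3 : a + b + c = a' ∨ a + b + c = a' + b' ∨ a + b + c = a' + b' + c' := by
      have : a + b + c ∈ ({a', a' + b', a' + b' + c'} : Finset ℕ) := by rw [← h]; simp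
      simpa using this
    have m4 : a' = a ∨ a' = a + b ∨ a' = a + b + c := by
      have : a' ∈ ({a, a + b, a + b + c} : Finset ℕ) := by rw [h]; simp
      simpa using this
    have m6 : a' + b' + c' = a ∨ a' + b' + c' = a + b ∨ a' + b' + c' = a + b + c := by
      have : a' + b' + c' ∈ ({a, a + b, a + b + c} : Finset ℕ) := by rw [h]; simp
      simpa using this
    simp only [Prod.mk.injEq]
    omega
  · intro s hs
    rw [Finset.mem_powersetCard] at hs
    obtain ⟨hsub, hcard⟩ := hs
    obtain ⟨x, y, z, hxy, hxz, hyz, rfl⟩ := Finset.card_eq_three.mp hcard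
    have hx : x ≤ n := by
      have := hsub (Finset.mem_insert_self x _); rw [Finset.mem_range] at this; omega
    have hy : y ≤ n := by
      have := hsub (by simp : y ∈ ({x, y, z} : Finset ℕ)); rw [Finset.mem_range] at this; omega
    have hz : z ≤ n := by
      have := hsub (by simp : z ∈ ({x, y, z} : Finset ℕ)); rw [Finset.mem_range] at this; omega
    have key : ∀ u v W : ℕ, u < v → v < W → W ≤ n → ({u, v, W} : Finset ℕ) = {x, y, z} →
        ∃ p, ∃ hp : p ∈ T n,
          ({p.1, p.1 + p.2.1, p.1 + p.2.1 + p.2.2} : Finset ℕ) = {x, y, z} := by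
      intro u v W h1 h2 h3 h4
      refine ⟨(u, v - u, W - v), ?_, ?_⟩
      · rw [mem_T]; simp; omega
      · have e1 : u + (v - u) = v := by omega
        rw [e1]
        have e2 : v + (W - v) = W := by omega
        rw [e2]
        exact h4
    rcases Nat.lt_trichotomy x y with h1 | h1 | h1
    · rcases Nat.lt_trichotomy y z with h2 | h2 | h2
      · exact key x y z h1 h2 hz rfl
      · omega
      · rcases Nat.lt_trichotomy x z with h3 | h3 | h3
        · exact key x z y h3 h2 hy (by ext t; simp; tauto)
        · omega
        · exact key z x y h3 h1 hy (by ext t; simp; tauto)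
    · omega
    · rcases Nat.lt_trichotomy x z with h2 | h2 | h2
      · exact key y x z h1 h2 hz (by ext t; simp; tauto)
      · omega
      · rcases Nat.lt_trichotomy y z with h3 | h3 | h3
        · exact key y z x h3 h2 hx (by ext t; simp; tauto)
        · omega
        · exact key z y x h3 h1 hx (by ext t; simp; tauto)

lemma choose_three (n : ℕ) : (n + 1).choose 3 * 6 = (n - 1) * n * (n + 1) := by
  match n with
  | 0 => decide
  | 1 => decide
  | (m + 2) =>
    have h := Nat.choose_mul_factorial_mul_factorial (show 3 ≤ m + 3 by omega)
    have h2 : (m + 3) - 3 = m := by omega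
    rw [h2] at h
    have h3 : Nat.factorial (m + 3) = (m + 3) * ((m + 2) * ((m + 1) * Nat.factorial m)) := by
      rw [Nat.factorial_succ, Nat.factorial_succ, Nat.factorial_succ]
    have h4 : Nat.factorial 3 = 6 := rfl
    rw [h4, h3] at h
    have h5 : (m + 2 - 1) = m + 1 := rfl
    rw [h5]
    apply Nat.eq_of_mul_eq_mul_right (Nat.factorial_pos m)
    calc (m + 2 + 1).choose 3 * 6 * Nat.factorial m
        = (m + 3).choose 3 * 6 * Nat.factorial m := rfl
      _ = (m + 3) * ((m + 2) * ((m + 1) * Nat.factorial m)) := h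
      _ = (m + 1) * (m + 2) * (m + 2 + 1) * Nat.factorial m := by ring

/-- The number of meet-irreducible (bigrassmannian) permutations in Sₙ equals
(n−1)n(n+1)/6. -/
theorem card_bigrassmannian (n : ℕ) :
    {w : Equiv.Perm ℕ | Supported n w ∧
        (leftDescents n w).card = 1 ∧ (rightDescents n w).card = 1}.ncard * 6 =
      (n - 1) * n * (n + 1) := by
  classical
  have hset : {w : Equiv.Perm ℕ | Supported n w ∧
      (leftDescents n w).card = 1 ∧ (rightDescents n w).card = 1} =
      ↑((T n).image (fun p => bg p.1 p.2.1 p.2.2)) := by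
    ext w
    simp only [Set.mem_setOf_eq, Finset.coe_image, Set.mem_image, Finset.mem_coe]
    constructor
    · rintro ⟨h1, h2, h3⟩
      obtain ⟨a, b, c, hb, hc, hn, rfl⟩ := converse h1 h2 h3
      exact ⟨(a, b, c), mem_T.mpr ⟨hb, hc, hn⟩, rfl⟩
    · rintro ⟨⟨a, b, c⟩, hp, rfl⟩
      rw [mem_T] at hp
      dsimp only at hp ⊢
      obtain ⟨hb, hc, hn⟩ := hp
      refine ⟨bg_supported n a b c hn, ?_, ?_⟩
      · rw [bg_leftDescents n a b c hb hc hn]; simp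
      · rw [bg_rightDescents n a b c hb hc hn]; simp
  rw [hset, Set.ncard_coe_finset]
  rw [Finset.card_image_of_injOn]
  · rw [card_T]; exact choose_three n
  · rintro ⟨a, b, c⟩ hp ⟨a', b', c'⟩ hq h
    rw [Finset.mem_coe, mem_T] at hp hq
    dsimp only at hp hq h
    obtain ⟨e1, e2, e3⟩ := bg_inj hp.1 hp.2.1 hq.1 hq.2.1 h
    simp only [Prod.mk.injEq]
    exact ⟨e1, e2, e3⟩
end
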